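/- arXiv:1004.0214 — 4 statements merged into one kernel-verified Lean document; each statement's English description precedes it below -/
import Mathlib

section
/- If B₁ and B₂ are two closed round balls in the plane ℂ such that B₁ ∩ B₂ is nonempty but does not contain a diameter (a segment through the center of length equal to the diameter) of either B₁ or B₂, then B₁ ∩ B₂ is contained in a closed ball whose diameter is strictly less than the diameters of both B₁ and B₂. -/
open Complex Metric

/-- A segment through `c₁` perpendicular to `c₂ - c₁`, of half-length `r₁`, lies in both
closed balls when `normSq (c₂ - c₁) + r₁ ^ 2 ≤ r₂ ^ 2`. -/
lemma seg_sub_aux (c₁ c₂ δ : ℂ) (r₁ r₂ : ℝ) (hr₁ : 0 ≤ r₁) (hr₂ : 0 ≤ r₂)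
    (habs : ‖δ‖ = r₁)
    (hperp : δ.re * (c₂ - c₁).re + δ.im * (c₂ - c₁).im = 0)
    (h : Complex.normSq (c₂ - c₁) + r₁ ^ 2 ≤ r₂ ^ 2) :
    segment ℝ (c₁ - δ) (c₁ + δ) ⊆ Metric.closedBall c₁ r₁ ∩ Metric.closedBall c₂ r₂ := by
  intro p hp
  obtain ⟨a, b, ha, hb, hab, rfl⟩ := hp
  have hab' : (a : ℂ) + b = 1 := by exact_mod_cast congrArg (Complex.ofReal) hab
  have e : a • (c₁ - δ) + b • (c₁ + δ) = c₁ + (b - a) • δ := by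
    simp only [Complex.real_smul, Complex.ofReal_sub]
    linear_combination c₁ * hab'
  rw [e]
  have hs1 : |b - a| ≤ 1 := by
    rw [abs_le]; constructor <;> linarith
  have hs2 : (b - a) ^ 2 ≤ 1 := by
    nlinarith [abs_nonneg (b - a), _root_.sq_abs (b - a)]
  have hδ : δ.re ^ 2 + δ.im ^ 2 = r₁ ^ 2 := by
    have := Complex.sq_norm δ
    rw [habs] at this
    rw [this, Complex.normSq_apply]; ring
  constructor
  · rw [Metric.mem_closedBall, Complex.dist_eq]
    have : c₁ + (b - a) • δ - c₁ = ((b - a : ℝ) : ℂ) * δ := by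
      rw [Complex.real_smul]; ring
    rw [this, norm_mul, Complex.norm_real, Real.norm_eq_abs, habs]
    calc |b - a| * r₁ ≤ 1 * r₁ := by
          exact mul_le_mul_of_nonneg_right hs1 hr₁
      _ = r₁ := one_mul r₁
  · rw [Metric.mem_closedBall, Complex.dist_eq, Complex.norm_def]
    have key : Complex.normSq (c₁ + (b - a) • δ - c₂) ≤ r₂ ^ 2 := by
      have hn : Complex.normSq (c₂ - c₁) = (c₂.re - c₁.re) ^ 2 + (c₂.im - c₁.im) ^ 2 := by
        rw [Complex.normSq_apply]; simp [Complex.sub_re, Complex.sub_im]; ring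
      rw [hn] at h
      simp only [Complex.sub_re, Complex.sub_im] at hperp
      simp only [Complex.normSq_apply, Complex.real_smul, Complex.add_re, Complex.add_im,
        Complex.sub_re, Complex.sub_im, Complex.mul_re, Complex.mul_im,
        Complex.ofReal_re, Complex.ofReal_im]
      nlinarith [hs2, hδ, hperp, h, mul_le_mul_of_nonneg_right hs2 (by nlinarith : (0:ℝ) ≤ δ.re ^ 2 + δ.im ^ 2)]
    calc Real.sqrt (Complex.normSq (c₁ + (b - a) • δ - c₂)) ≤ Real.sqrt (r₂ ^ 2) :=
          Real.sqrt_le_sqrt key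
      _ = r₂ := by rw [Real.sqrt_sq hr₂]

/-- If two closed round balls in the plane intersect, and their intersection does not
contain a diameter of either ball, then the intersection is contained in a closed ball
of strictly smaller diameter than both. -/
theorem ball_intersection_in_strictly_smaller_ball
    (c₁ c₂ : ℂ) (r₁ r₂ : ℝ) (hr₁ : 0 < r₁) (hr₂ : 0 < r₂)
    (hne : (Metric.closedBall c₁ r₁ ∩ Metric.closedBall c₂ r₂).Nonempty)
    (hd₁ : ¬ ∃ d : ℂ, ‖d‖ = r₁ ∧
      segment ℝ (c₁ - d) (c₁ + d) ⊆ Metric.closedBall c₁ r₁ ∩ Metric.closedBall c₂ r₂)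
    (hd₂ : ¬ ∃ d : ℂ, ‖d‖ = r₂ ∧
      segment ℝ (c₂ - d) (c₂ + d) ⊆ Metric.closedBall c₁ r₁ ∩ Metric.closedBall c₂ r₂) :
    ∃ (c : ℂ) (r : ℝ), r < r₁ ∧ r < r₂ ∧
      Metric.closedBall c₁ r₁ ∩ Metric.closedBall c₂ r₂ ⊆ Metric.closedBall c r := by
  have hswap : Complex.normSq (c₁ - c₂) = Complex.normSq (c₂ - c₁) := by
    rw [← neg_sub, Complex.normSq_neg]
  -- centers are distinct
  have hcc : c₁ ≠ c₂ := by
    intro hc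
    rcases le_total r₁ r₂ with hle | hle
    · refine hd₁ ⟨(r₁ : ℂ), by rw [Complex.norm_real, Real.norm_eq_abs, _root_.abs_of_nonneg hr₁.le], ?_⟩
      apply seg_sub_aux c₁ c₂ _ r₁ r₂ hr₁.le hr₂.le
        (by rw [Complex.norm_real, Real.norm_eq_abs, _root_.abs_of_nonneg hr₁.le])
      · simp [hc]
      · rw [hc]; simp; nlinarith
    · refine hd₂ ⟨(r₂ : ℂ), by rw [Complex.norm_real, Real.norm_eq_abs, _root_.abs_of_nonneg hr₂.le], ?_⟩
      rw [Set.inter_comm]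
      apply seg_sub_aux c₂ c₁ _ r₂ r₁ hr₂.le hr₁.le
        (by rw [Complex.norm_real, Real.norm_eq_abs, _root_.abs_of_nonneg hr₂.le])
      · simp [hc]
      · rw [hc]; simp; nlinarith
  have hsub : (c₂ - c₁) ≠ 0 := sub_ne_zero.mpr (Ne.symm hcc)
  have habs0 : 0 < ‖c₂ - c₁‖ := norm_pos_iff.mpr hsub
  set D := Complex.normSq (c₂ - c₁) with hDdef
  have hDpos : 0 < D := Complex.normSq_pos.mpr hsub
  -- key inequality 1
  have h1 : r₂ ^ 2 < D + r₁ ^ 2 := by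
    by_contra hcon
    push_neg at hcon
    set d := ‖c₂ - c₁‖ with hddef
    refine hd₁ ⟨((r₁ / d : ℝ) : ℂ) * (Complex.I * (c₂ - c₁)), ?_, ?_⟩
    · rw [norm_mul, norm_mul, Complex.norm_real, Real.norm_eq_abs, Complex.norm_I, one_mul,
        _root_.abs_of_nonneg (by positivity : (0:ℝ) ≤ r₁ / d)]
      field_simp
      exact hddef.symm
    · apply seg_sub_aux c₁ c₂ _ r₁ r₂ hr₁.le hr₂.le
      · rw [norm_mul, norm_mul, Complex.norm_real, Real.norm_eq_abs, Complex.norm_I, one_mul,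
          _root_.abs_of_nonneg (by positivity : (0:ℝ) ≤ r₁ / d)]
        field_simp
        exact hddef.symm
      · simp only [Complex.mul_re, Complex.mul_im, Complex.I_re, Complex.I_im,
          Complex.ofReal_re, Complex.ofReal_im]
        ring
      · linarith
  -- key inequality 2
  have h2 : r₁ ^ 2 < D + r₂ ^ 2 := by
    by_contra hcon
    push_neg at hcon
    set d := ‖c₁ - c₂‖ with hddef
    have hd' : 0 < d := by rw [hddef, ← neg_sub, norm_neg]; exact habs0
    refine hd₂ ⟨((r₂ / d : ℝ) : ℂ) * (Complex.I * (c₁ - c₂)), ?_, ?_⟩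
    · rw [norm_mul, norm_mul, Complex.norm_real, Real.norm_eq_abs, Complex.norm_I, one_mul,
        _root_.abs_of_nonneg (by positivity : (0:ℝ) ≤ r₂ / d)]
      field_simp
      exact hddef.symm
    · rw [Set.inter_comm]
      apply seg_sub_aux c₂ c₁ _ r₂ r₁ hr₂.le hr₁.le
      · rw [norm_mul, norm_mul, Complex.norm_real, Real.norm_eq_abs, Complex.norm_I, one_mul,
          _root_.abs_of_nonneg (by positivity : (0:ℝ) ≤ r₂ / d)]
        field_simp
        exact hddef.symm
      · simp only [Complex.mul_re, Complex.mul_im, Complex.I_re, Complex.I_im,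
          Complex.ofReal_re, Complex.ofReal_im]
        ring
      · rw [hswap]; linarith
  set t : ℝ := (D + r₁ ^ 2 - r₂ ^ 2) / (2 * D) with htdef
  have ht : 2 * D * t = D + r₁ ^ 2 - r₂ ^ 2 := by
    rw [htdef]; field_simp
  have ht0 : 0 < t := div_pos (by linarith) (by linarith)
  have ht1 : t < 1 := (div_lt_one (by linarith)).mpr (by linarith)
  refine ⟨c₁ + ((t : ℝ) : ℂ) * (c₂ - c₁), Real.sqrt (r₁ ^ 2 - t ^ 2 * D), ?_, ?_, ?_⟩
  · rw [Real.sqrt_lt' hr₁]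
    nlinarith [mul_pos (mul_pos ht0 ht0) hDpos]
  · rw [Real.sqrt_lt' hr₂]
    have hpos : 0 < D * (1 - t) ^ 2 := mul_pos hDpos (pow_pos (by linarith) 2)
    nlinarith [ht, hpos]
  · intro z hz
    obtain ⟨hz1, hz2⟩ := hz
    rw [Metric.mem_closedBall, Complex.dist_eq] at hz1 hz2
    have e1 : Complex.normSq (z - c₁) ≤ r₁ ^ 2 := by
      rw [← Complex.sq_norm]
      exact pow_le_pow_left₀ (norm_nonneg _) hz1 2
    have e2 : Complex.normSq (z - c₂) ≤ r₂ ^ 2 := by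
      rw [← Complex.sq_norm]
      exact pow_le_pow_left₀ (norm_nonneg _) hz2 2
    have hD : D = (c₂.re - c₁.re) ^ 2 + (c₂.im - c₁.im) ^ 2 := by
      rw [hDdef, Complex.normSq_apply]; simp [Complex.sub_re, Complex.sub_im]; ring
    have key : Complex.normSq (z - (c₁ + ((t : ℝ) : ℂ) * (c₂ - c₁))) ≤ r₁ ^ 2 - t ^ 2 * D := by
      rw [hD] at ht ⊢
      simp only [Complex.normSq_apply, Complex.sub_re, Complex.sub_im] at e1 e2
      simp only [Complex.normSq_apply, Complex.add_re, Complex.add_im, Complex.sub_re,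
        Complex.sub_im, Complex.mul_re, Complex.mul_im, Complex.ofReal_re, Complex.ofReal_im]
      have k1 : (1 - t) * ((z.re - c₁.re) * (z.re - c₁.re) + (z.im - c₁.im) * (z.im - c₁.im))
          ≤ (1 - t) * r₁ ^ 2 :=
        mul_le_mul_of_nonneg_left e1 (by linarith)
      have k2 : t * ((z.re - c₂.re) * (z.re - c₂.re) + (z.im - c₂.im) * (z.im - c₂.im))
          ≤ t * r₂ ^ 2 :=
        mul_le_mul_of_nonneg_left e2 ht0.le
      have ht' : t * (2 * ((c₂.re - c₁.re) ^ 2 + (c₂.im - c₁.im) ^ 2) * t)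
          = t * (((c₂.re - c₁.re) ^ 2 + (c₂.im - c₁.im) ^ 2) + r₁ ^ 2 - r₂ ^ 2) := by
        rw [ht]
      nlinarith [k1, k2, ht']
    rw [Metric.mem_closedBall, Complex.dist_eq, Complex.norm_def]
    calc Real.sqrt (Complex.normSq (z - (c₁ + ((t : ℝ) : ℂ) * (c₂ - c₁))))
        ≤ Real.sqrt (r₁ ^ 2 - t ^ 2 * D) := Real.sqrt_le_sqrt key
      _ = _ := rfl
end

section
/- Let h_t : S¹ → ℂ (t ∈ [0,1]) be a homotopy and f a continuous map defined on ⋃_{t∈[0,1]} h_t(S¹) with no fixed points there. Then ind(f, h₀) = ind(f, h₁). -/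
private lemma intValued_continuous_eq {g : ℝ → ℝ} (hg : Continuous g)
    (hint : ∀ t, ∃ n : ℤ, g t = n) (a b : ℝ) : g a = g b := by
  have main : ∀ a b : ℝ, g a ≤ g b → g a = g b := by
    intro a b hab
    by_contra hne
    obtain ⟨m, hm⟩ := hint a
    obtain ⟨n, hn⟩ := hint b
    have hlt : g a < g b := lt_of_le_of_ne hab hne
    have hmn : (m : ℝ) < n := by rw [← hm, ← hn]; exact hlt
    have hmn' : m < n := by exact_mod_cast hmn
    have hy : (m : ℝ) + 1/2 ∈ Set.Icc (g a) (g b) := by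
      constructor
      · rw [hm]; linarith
      · rw [hn]
        have : (m : ℝ) + 1 ≤ n := by exact_mod_cast hmn'
        linarith
    obtain ⟨t, ht⟩ := intermediate_value_univ a b hg hy
    obtain ⟨k, hk⟩ := hint t
    rw [hk] at ht
    have h2 : (2 * k : ℝ) = 2 * m + 1 := by linarith
    have : 2 * k = 2 * m + 1 := by exact_mod_cast h2
    omega
  rcases le_total (g a) (g b) with h | h
  · exact main a b h
  · exact (main b a h).symm

private lemma aux_Dcont {G : ℝ → ℝ → ℂ} (hGcont : Continuous fun p : ℝ × ℝ => G p.1 p.2)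
    (hGne : ∀ s t, G s t ≠ 0) :
    Continuous fun p : ℝ × ℝ => (‖G p.1 p.2‖ : ℂ)⁻¹ * G p.1 p.2 := by
  have habs : Continuous fun p : ℝ × ℝ => (‖G p.1 p.2‖ : ℂ) :=
    Complex.continuous_ofReal.comp (continuous_norm.comp hGcont)
  exact (habs.inv₀ (fun p => by
    simp only [ne_eq, Complex.ofReal_eq_zero]
    exact norm_ne_zero_iff.mpr (hGne p.1 p.2))).mul hGcont

private lemma aux_Dabs {G : ℝ → ℝ → ℂ} (hGne : ∀ s t, G s t ≠ 0) (s t : ℝ) :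
    ‖(‖G s t‖ : ℂ)⁻¹ * G s t‖ = 1 := by
  have h0 : ‖G s t‖ ≠ 0 := norm_ne_zero_iff.mpr (hGne s t)
  rw [norm_mul, norm_inv, Complex.norm_real, norm_norm,
    inv_mul_cancel₀ h0]

private lemma aux_lift {G : ℝ → ℝ → ℂ} (hGne : ∀ s t, G s t ≠ 0) {s : ℝ} {w : ℝ → ℝ}
    (h : ∀ t, G s t = (‖G s t‖ : ℂ) *
      Complex.exp (((w t : ℝ) : ℂ) * Complex.I)) (t : ℝ) :
    (‖G s t‖ : ℂ)⁻¹ * G s t = Complex.exp (((w t : ℝ) : ℂ) * Complex.I) := by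
  have hne : (‖G s t‖ : ℂ) ≠ 0 := by
    simp only [ne_eq, Complex.ofReal_eq_zero]; exact norm_ne_zero_iff.mpr (hGne s t)
  nth_rewrite 2 [h t]
  rw [← mul_assoc, inv_mul_cancel₀ hne, one_mul]

private lemma aux_step {D : ℝ → ℝ → ℂ} {s s' : ℝ}
    (hDs : Continuous fun t => D s t) (hDs' : Continuous fun t => D s' t)
    (habs : ∀ t, ‖D s t‖ = 1) (habs' : ∀ t, ‖D s' t‖ = 1)
    (hclose : ∀ t, ‖D s' t - D s t‖ < 1)
    (hpe : D s 1 = D s 0) (hpe' : D s' 1 = D s' 0)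
    {w : ℝ → ℝ} (hwc : Continuous w)
    (hwl : ∀ t, D s t = Complex.exp ((w t : ℂ) * Complex.I)) :
    ∃ w' : ℝ → ℝ, Continuous w' ∧
      (∀ t, D s' t = Complex.exp ((w' t : ℂ) * Complex.I)) ∧
      w' 1 - w' 0 = w 1 - w 0 := by
  have hne : ∀ t, D s t ≠ 0 := by
    intro t h; have := habs t; rw [h] at this; simp at this
  have hne' : ∀ t, D s' t ≠ 0 := by
    intro t h; have := habs' t; rw [h] at this; simp at this
  set r : ℝ → ℂ := fun t => D s' t * (D s t)⁻¹ with hr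
  have habsr : ∀ t, ‖r t‖ = 1 := by
    intro t; rw [hr]; simp only [norm_mul, norm_inv, habs, habs']; norm_num
  have hrsub : ∀ t, ‖r t - 1‖ < 1 := by
    intro t
    have he : r t - 1 = (D s' t - D s t) * (D s t)⁻¹ := by
      show D s' t * (D s t)⁻¹ - 1 = _
      rw [sub_mul, mul_inv_cancel₀ (hne t)]
    rw [he, norm_mul, norm_inv, habs, inv_one, mul_one]
    exact hclose t
  have hslit : ∀ t, r t ∈ Complex.slitPlane := by
    intro t
    left
    have h1 : (1 - r t).re ≤ ‖1 - r t‖ := Complex.re_le_norm _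
    have h2 : ‖1 - r t‖ < 1 := by
      rw [← norm_neg, neg_sub]; exact hrsub t
    have h3 : (1 - r t).re = 1 - (r t).re := by simp [Complex.sub_re]
    linarith
  have hrc : Continuous r := hDs'.mul (hDs.inv₀ hne)
  set φ : ℝ → ℝ := fun t => Complex.arg (r t) with hφ
  have hφc : Continuous φ := by
    rw [continuous_iff_continuousAt]
    intro t
    exact (Complex.continuousAt_arg (hslit t)).comp hrc.continuousAt
  have hexpφ : ∀ t, Complex.exp ((φ t : ℂ) * Complex.I) = r t := by
    intro t
    have := Complex.norm_mul_exp_arg_mul_I (r t)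
    rwa [habsr, Complex.ofReal_one, one_mul] at this
  refine ⟨fun t => w t + φ t, hwc.add hφc, ?_, ?_⟩
  · intro t
    push_cast
    rw [add_mul, Complex.exp_add, ← hwl t, hexpφ t]
    show D s' t = D s t * (D s' t * (D s t)⁻¹)
    rw [mul_comm (D s' t) ((D s t)⁻¹), ← mul_assoc, mul_inv_cancel₀ (hne t), one_mul]
  · have : φ 1 = φ 0 := by rw [hφ]; simp only [hr, hpe, hpe']
    simp only [this]; ring

/-- Homotopy invariance of the index: if `H` is a homotopy of loops (each level a loop of
period 1) and `f` has no fixed points on the image of the homotopy, then the index of `f`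
with respect to the initial loop equals the index with respect to the terminal loop.
The indices are expressed via continuous lifts `v₀`, `v₁` of the direction maps. -/
theorem index_homotopy_invariant
    (H : ℝ → ℝ → ℂ) (f : ℂ → ℂ)
    (hH : Continuous fun p : ℝ × ℝ => H p.1 p.2)
    (hper : ∀ s t : ℝ, H s (t + 1) = H s t)
    (hf : ContinuousOn f {z : ℂ | ∃ s ∈ Set.Icc (0:ℝ) 1, ∃ t : ℝ, H s t = z})
    (hfp : ∀ s ∈ Set.Icc (0:ℝ) 1, ∀ t : ℝ, f (H s t) ≠ H s t)
    (v₀ v₁ : ℝ → ℝ) (hv₀ : Continuous v₀) (hv₁ : Continuous v₁)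
    (hl₀ : ∀ t : ℝ, f (H 0 t) - H 0 t =
      (‖f (H 0 t) - H 0 t‖ : ℂ) *
        Complex.exp (((2 * Real.pi * v₀ t : ℝ) : ℂ) * Complex.I))
    (hl₁ : ∀ t : ℝ, f (H 1 t) - H 1 t =
      (‖f (H 1 t) - H 1 t‖ : ℂ) *
        Complex.exp (((2 * Real.pi * v₁ t : ℝ) : ℂ) * Complex.I)) :
    v₀ 1 - v₀ 0 = v₁ 1 - v₁ 0 := by
  classical
  -- clamp function
  have hc01 : ∀ s, max 0 (min 1 s) ∈ Set.Icc (0:ℝ) 1 :=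
    fun s => ⟨le_max_left _ _, max_le zero_le_one (min_le_left _ _)⟩
  classical
  have hc01 : ∀ s, max 0 (min 1 s) ∈ Set.Icc (0:ℝ) 1 :=
    fun s => ⟨le_max_left _ _, max_le zero_le_one (min_le_left _ _)⟩
  have hcid : ∀ s ∈ Set.Icc (0:ℝ) 1, max 0 (min 1 s) = s := by
    intro s hs
    rw [min_eq_right hs.2, max_eq_right hs.1]
  have hccont : Continuous fun s : ℝ => max 0 (min 1 s) :=
    continuous_const.max (continuous_const.min continuous_id)
  set G : ℝ → ℝ → ℂ := fun s t =>
    f (H (max 0 (min 1 s)) t) - H (max 0 (min 1 s)) t with hG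
  have hHc : Continuous fun p : ℝ × ℝ => H (max 0 (min 1 p.1)) p.2 := by
    have : (fun p : ℝ × ℝ => H (max 0 (min 1 p.1)) p.2) =
        (fun q : ℝ × ℝ => H q.1 q.2) ∘ (fun p : ℝ × ℝ => (max 0 (min 1 p.1), p.2)) := rfl
    rw [this]
    exact hH.comp ((hccont.comp continuous_fst).prodMk continuous_snd)
  have hGcont : Continuous fun p : ℝ × ℝ => G p.1 p.2 := by
    have hfH : Continuous fun p : ℝ × ℝ => f (H (max 0 (min 1 p.1)) p.2) :=
      hf.comp_continuous hHc (fun p => ⟨max 0 (min 1 p.1), hc01 _, p.2, rfl⟩)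
    exact hfH.sub hHc
  have hGne : ∀ s t, G s t ≠ 0 := fun s t => sub_ne_zero.mpr (hfp _ (hc01 s) t)
  have hGper : ∀ s t, G s (t + 1) = G s t := by
    intro s t; simp only [hG, hper]
  set D : ℝ → ℝ → ℂ := fun s t => (‖G s t‖ : ℂ)⁻¹ * G s t with hD
  have hDabs : ∀ s t, ‖D s t‖ = 1 := fun s t => aux_Dabs hGne s t
  have hDcont : Continuous fun p : ℝ × ℝ => D p.1 p.2 := by
    simp only [hD]; exact aux_Dcont hGcont hGne
  have hDcont' : ∀ s, Continuous fun t => D s t := by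
    intro s
    have h : (fun t => D s t) = (fun p : ℝ × ℝ => D p.1 p.2) ∘ (fun t : ℝ => (s, t)) := rfl
    rw [h]
    exact hDcont.comp (continuous_const.prodMk continuous_id)
  have hDper : ∀ s, Function.Periodic (fun t => D s t) 1 := by
    intro s t; simp only [hD, hGper]
  have hDfract : ∀ s t, D s t = D s (Int.fract t) := by
    intro s t
    have h := (hDper s).sub_int_mul_eq (x := t) ⌊t⌋
    rw [mul_one] at h
    exact h.symm
  have hc00 : max (0:ℝ) (min 1 0) = 0 := by norm_num
  have hc11 : max (0:ℝ) (min 1 1) = 1 := by norm_num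
  have hG0 : ∀ t, G 0 t = (‖G 0 t‖ : ℂ) *
      Complex.exp (((2 * Real.pi * v₀ t : ℝ) : ℂ) * Complex.I) := by
    intro t
    simp only [hG, hc00]
    exact hl₀ t
  have hG1 : ∀ t, G 1 t = (‖G 1 t‖ : ℂ) *
      Complex.exp (((2 * Real.pi * v₁ t : ℝ) : ℂ) * Complex.I) := by
    intro t
    simp only [hG, hc11]
    exact hl₁ t
  have hlift0 : ∀ t, D 0 t = Complex.exp (((2 * Real.pi * v₀ t : ℝ) : ℂ) * Complex.I) := by
    intro t
    exact aux_lift (w := fun t => 2 * Real.pi * v₀ t) hGne hG0 t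
  have hlift1 : ∀ t, D 1 t = Complex.exp (((2 * Real.pi * v₁ t : ℝ) : ℂ) * Complex.I) := by
    intro t
    exact aux_lift (w := fun t => 2 * Real.pi * v₁ t) hGne hG1 t
  -- uniform continuity on the compact square
  have hK : IsCompact ((Set.Icc (0:ℝ) 1) ×ˢ (Set.Icc (0:ℝ) 1)) :=
    (isCompact_Icc).prod (isCompact_Icc)
  have hUC := hK.uniformContinuousOn_of_continuous hDcont.continuousOn
  rw [Metric.uniformContinuousOn_iff] at hUC
  obtain ⟨δ, hδpos, hδ⟩ := hUC 1 one_pos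
  have hclose : ∀ s ∈ Set.Icc (0:ℝ) 1, ∀ s' ∈ Set.Icc (0:ℝ) 1, dist s' s < δ →
      ∀ t : ℝ, ‖D s' t - D s t‖ < 1 := by
    intro s hs s' hs' hss t
    rw [hDfract s t, hDfract s' t]
    have hft : Int.fract t ∈ Set.Icc (0:ℝ) 1 :=
      ⟨Int.fract_nonneg t, (Int.fract_lt_one t).le⟩
    have h1 : ((s', Int.fract t) : ℝ × ℝ) ∈ (Set.Icc (0:ℝ) 1) ×ˢ (Set.Icc (0:ℝ) 1) :=
      ⟨hs', hft⟩
    have h2 : ((s, Int.fract t) : ℝ × ℝ) ∈ (Set.Icc (0:ℝ) 1) ×ˢ (Set.Icc (0:ℝ) 1) :=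
      ⟨hs, hft⟩
    have hd : dist ((s', Int.fract t) : ℝ × ℝ) ((s, Int.fract t) : ℝ × ℝ) < δ := by
      rw [Prod.dist_eq]
      simpa [dist_self, max_lt_iff] using hss
    have := hδ _ h1 _ h2 hd
    rwa [Complex.dist_eq] at this
  -- choose a fine partition
  obtain ⟨N0, hN0⟩ := exists_nat_one_div_lt hδpos
  set N : ℕ := N0 + 1 with hN
  have hNpos : (0:ℝ) < N := by positivity
  have hmem : ∀ k : ℕ, k ≤ N → ((k:ℝ)/N) ∈ Set.Icc (0:ℝ) 1 := by
    intro k hk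
    constructor
    · positivity
    · rw [div_le_one hNpos]; exact_mod_cast hk
  have key : ∀ k : ℕ, k ≤ N → ∃ w : ℝ → ℝ, Continuous w ∧
      (∀ t, D ((k:ℝ)/N) t = Complex.exp ((w t : ℂ) * Complex.I)) ∧
      w 1 - w 0 = 2*Real.pi*v₀ 1 - 2*Real.pi*v₀ 0 := by
    intro k
    induction k with
    | zero =>
      intro _
      refine ⟨fun t => 2*Real.pi*v₀ t, (continuous_const.mul hv₀), ?_, rfl⟩
      intro t
      have h0 : ((0:ℕ):ℝ)/N = 0 := by norm_num
      rw [h0]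
      exact hlift0 t
    | succ k ih =>
      intro hk
      obtain ⟨w, hwc, hwl, hwd⟩ := ih (Nat.le_of_succ_le hk)
      have hkN : (k:ℝ)/N ∈ Set.Icc (0:ℝ) 1 := hmem k (Nat.le_of_succ_le hk)
      have hkN' : ((k+1:ℕ):ℝ)/N ∈ Set.Icc (0:ℝ) 1 := hmem (k+1) hk
      have hdist : dist (((k+1:ℕ):ℝ)/N) ((k:ℝ)/N) < δ := by
        have hdiff : ((k+1:ℕ):ℝ)/N - (k:ℝ)/N = 1/N := by
          push_cast; field_simp; ring
        rw [Real.dist_eq, hdiff, abs_of_pos (by positivity)]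
        have : (N:ℝ) = (N0:ℝ) + 1 := by rw [hN]; push_cast; ring
        rw [this]
        exact hN0
      obtain ⟨w', hw'c, hw'l, hw'd⟩ := aux_step (hDcont' _) (hDcont' _)
        (hDabs _) (hDabs _)
        (hclose _ hkN _ hkN' hdist)
        (by simpa using (hDper ((k:ℝ)/N) 0)) (by simpa using (hDper (((k+1:ℕ):ℝ)/N) 0))
        hwc hwl
      exact ⟨w', hw'c, hw'l, by rw [hw'd, hwd]⟩
  -- conclude
  obtain ⟨w, hwc, hwl, hwd⟩ := key N le_rfl
  have hNN : ((N:ℕ):ℝ)/N = 1 := div_self (ne_of_gt hNpos)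
  rw [hNN] at hwl
  have hg : ∀ t, ∃ n : ℤ, (w t - 2*Real.pi*v₁ t)/(2*Real.pi) = n := by
    intro t
    have he : Complex.exp ((w t:ℂ) * Complex.I)
        = Complex.exp (((2*Real.pi*v₁ t : ℝ):ℂ) * Complex.I) := by
      rw [← hwl t, hlift1 t]
    obtain ⟨n, hn⟩ := Complex.exp_eq_exp_iff_exists_int.mp he
    refine ⟨n, ?_⟩
    have him := congrArg Complex.im hn
    simp [Complex.add_im, Complex.mul_im, Complex.ofReal_re, Complex.ofReal_im,
      Complex.I_re, Complex.I_im, Complex.mul_re, Complex.intCast_im, Complex.intCast_re] at him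
    rw [div_eq_iff (by positivity : (2*Real.pi) ≠ 0)]
    linarith
  have hgc : Continuous fun t => (w t - 2*Real.pi*v₁ t)/(2*Real.pi) :=
    (hwc.sub (continuous_const.mul hv₁)).div_const _
  have h10 := intValued_continuous_eq hgc hg 1 0
  have hpi : (0:ℝ) < 2*Real.pi := by positivity
  have h10' : w 1 - 2*Real.pi*v₁ 1 = w 0 - 2*Real.pi*v₁ 0 := by
    rw [div_eq_div_iff (ne_of_gt hpi) (ne_of_gt hpi)] at h10
    have := mul_right_cancel₀ (ne_of_gt hpi) h10
    linarith
  have hfin : 2*Real.pi*(v₀ 1 - v₀ 0) = 2*Real.pi*(v₁ 1 - v₁ 0) := by linarith [hwd]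
  exact mul_left_cancel₀ (ne_of_gt hpi) hfin
end

section
/- Let X ⊂ ℂ be a plane continuum and f : ℂ → ℂ a perfect surjection with f⁻¹(T(X)) = T(X) and f confluent on ℂ \ T(X). Then for each y ∈ ℂ \ T(X), every component of f⁻¹(y) is acyclic (nonseparating). -/
open Set Metric Bornology

/-! ### Auxiliary general lemmas -/

/-- `ℂ` is unbounded. -/
lemma complex_not_bounded_univ : ¬ IsBounded (Set.univ : Set ℂ) := by
  intro h
  obtain ⟨R, hR⟩ := h.subset_closedBall 0
  have := hR (mem_univ ((R + 1 : ℝ) : ℂ))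
  rw [mem_closedBall, dist_zero_right, Complex.norm_real, Real.norm_eq_abs] at this
  rcases abs_cases (R + 1) with ⟨h1, _⟩ | ⟨_, h2⟩ <;> linarith

/-- A point of an open set `F` lying in the closure of a connected component of `F`
belongs to that component. -/
lemma mem_connectedComponentIn_of_mem_closure {F : Set ℂ} (hF : IsOpen F) {z t : ℂ}
    (ht : t ∈ closure (connectedComponentIn F z)) (htF : t ∈ F) :
    t ∈ connectedComponentIn F z := by
  have h1 : connectedComponentIn F t ∈ nhds t :=
    (hF.connectedComponentIn).mem_nhds (mem_connectedComponentIn htF)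
  obtain ⟨u, hu1, hu2⟩ := mem_closure_iff_nhds.mp ht _ h1
  have e1 : connectedComponentIn F t = connectedComponentIn F u := connectedComponentIn_eq hu1
  have e2 : connectedComponentIn F z = connectedComponentIn F u := connectedComponentIn_eq hu2
  rw [e2, ← e1]
  exact mem_connectedComponentIn htF

lemma one_lt_rank_real_complex : 1 < Module.rank ℝ ℂ := by
  rw [Complex.rank_real_complex]; exact Nat.one_lt_ofNat

/-- A punctured ball in `ℂ` is preconnected. -/
lemma isPreconnected_ball_diff_singleton (y : ℂ) {r : ℝ} (hr : 0 < r) :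
    IsPreconnected (ball y r \ {y}) := by
  have hsph : IsPreconnected (sphere (0:ℂ) 1) :=
    (isConnected_sphere one_lt_rank_real_complex 0 zero_le_one).isPreconnected
  have hs : IsPreconnected ((Set.Ioo (0:ℝ) r) ×ˢ sphere (0:ℂ) 1) :=
    isPreconnected_Ioo.prod hsph
  have himg : (fun p : ℝ × ℂ => y + p.1 • p.2) '' ((Set.Ioo (0:ℝ) r) ×ˢ sphere (0:ℂ) 1)
      = ball y r \ {y} := by
    ext w
    constructor
    · rintro ⟨⟨t, u⟩, ⟨ht, hu⟩, rfl⟩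
      rw [mem_sphere_zero_iff_norm] at hu
      have hnorm : ‖t • u‖ = t := by
        rw [norm_smul, hu, Real.norm_eq_abs, abs_of_pos ht.1, mul_one]
      constructor
      · rw [mem_ball, dist_eq_norm]
        have he : y + t • u - y = t • u := by ring
        rw [he, hnorm]; exact ht.2
      · simp only [mem_singleton_iff]
        intro h
        have : ‖(t • u : ℂ)‖ = 0 := by
          have : (t • u : ℂ) = 0 := by linear_combination h - (y : ℂ)
          simp [this]
        rw [hnorm] at this
        exact absurd this (ne_of_gt ht.1)
    · rintro ⟨hw, hwy⟩
      rw [mem_singleton_iff] at hwy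
      have hne : w - y ≠ 0 := sub_ne_zero.mpr hwy
      have hpos : 0 < ‖w - y‖ := norm_pos_iff.mpr hne
      refine ⟨⟨‖w - y‖, ‖w - y‖⁻¹ • (w - y)⟩, ⟨⟨hpos, ?_⟩, ?_⟩, ?_⟩
      · rw [mem_ball, dist_eq_norm] at hw; exact hw
      · rw [mem_sphere_zero_iff_norm, norm_smul, Real.norm_eq_abs,
          abs_of_pos (inv_pos.mpr hpos), inv_mul_cancel₀ (ne_of_gt hpos)]
      · simp only [smul_smul, mul_inv_cancel₀ (ne_of_gt hpos), one_smul]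
        ring
  rw [← himg]
  exact hs.image _ (Continuous.continuousOn (by fun_prop))

/-- An open preconnected subset of `ℂ` minus a point is preconnected. -/
lemma isPreconnected_open_diff_singleton {U : Set ℂ} (hUo : IsOpen U)
    (hU : IsPreconnected U) (y : ℂ) : IsPreconnected (U \ {y}) := by
  by_cases hyU : y ∈ U
  · obtain ⟨r, hr, hball⟩ := Metric.isOpen_iff.mp hUo y hyU
    have hP : IsPreconnected (ball y r \ {y}) := isPreconnected_ball_diff_singleton y hr
    set p₀ : ℂ := y + (r/2 : ℝ) • (1:ℂ) with hp₀
    have hp₀d : dist p₀ y = r/2 := by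
      rw [dist_eq_norm]
      have : p₀ - y = (r/2 : ℝ) • (1:ℂ) := by rw [hp₀]; ring
      rw [this, norm_smul, norm_one, mul_one, Real.norm_eq_abs, abs_of_pos (by linarith)]
    have hp₀P : p₀ ∈ ball y r \ {y} := by
      constructor
      · rw [mem_ball, hp₀d]; linarith
      · simp only [mem_singleton_iff]
        intro h
        rw [h, dist_self] at hp₀d; linarith
    have hPU : ball y r \ {y} ⊆ U \ {y} := fun t ht => ⟨hball ht.1, ht.2⟩
    apply isPreconnected_of_forall p₀
    intro a ha
    by_cases haP : a ∈ ball y r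
    · exact ⟨ball y r \ {y}, hPU, hp₀P, ⟨haP, ha.2⟩, hP⟩
    · have haU : a ∈ U := ha.1
      have hUconn : IsConnected U := ⟨⟨y, hyU⟩, hU⟩
      have hpath : IsPathConnected U := (hUo.isConnected_iff_isPathConnected).mp hUconn
      obtain ⟨γ, hγ⟩ := hpath.joinedIn a haU p₀ (hball hp₀P.1)
      set g : ℝ → ℝ := fun t => dist (γ.extend t) y with hg
      have hgc : Continuous g := γ.continuous_extend.dist continuous_const
      set S : Set ℝ := Set.Icc 0 1 ∩ g ⁻¹' Set.Iic (r/2) with hS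
      have hS1 : (1:ℝ) ∈ S := by
        refine ⟨⟨zero_le_one, le_refl 1⟩, ?_⟩
        simp only [mem_preimage, mem_Iic, hg]
        rw [Path.extend_one, hp₀d]
      have hScl : IsClosed S := isClosed_Icc.inter (isClosed_Iic.preimage hgc)
      have hSbdd : BddBelow S := ⟨0, fun t ht => ht.1.1⟩
      set s := sInf S with hsdef
      have hsS : s ∈ S := hScl.csInf_mem ⟨1, hS1⟩ hSbdd
      have hs0 : 0 ≤ s := hsS.1.1
      have hs1 : s ≤ 1 := hsS.1.2
      have hgsle : g s ≤ r/2 := hsS.2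
      have hlt : ∀ t, 0 ≤ t → t < s → r/2 < g t := by
        intro t ht hts
        by_contra h
        push_neg at h
        have : t ∈ S := ⟨⟨ht, hts.le.trans hs1⟩, h⟩
        exact absurd (csInf_le hSbdd this) (not_le.mpr hts)
      have hspos : 0 < s := by
        rcases eq_or_lt_of_le hs0 with h0 | h0
        · exfalso
          have hg0 : g 0 = dist a y := by rw [hg]; simp [Path.extend_zero]
          have h1 : r ≤ dist a y := not_lt.mp (by simpa [mem_ball] using haP)
          have h2 : g s ≤ r/2 := hgsle
          rw [← h0, hg0] at h2
          linarith
        · exact h0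
      have hgs : r/2 ≤ g s := by
        have hsub : Set.Ico (0:ℝ) s ⊆ {t | r/2 ≤ g t} := fun t ht => (hlt t ht.1 ht.2).le
        have hclosed : IsClosed {t : ℝ | r/2 ≤ g t} := isClosed_le continuous_const hgc
        have hsubcl : closure (Set.Ico (0:ℝ) s) ⊆ {t | r/2 ≤ g t} :=
          hclosed.closure_subset_iff.mpr hsub
        have hsmem : s ∈ closure (Set.Ico (0:ℝ) s) := by
          rw [closure_Ico (ne_of_lt hspos)]
          exact ⟨hs0, le_refl s⟩
        exact hsubcl hsmem
      have hgsne : γ.extend s ≠ y := by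
        intro h
        have : g s = 0 := by rw [hg]; simp [h]
        linarith
      have hA : IsPreconnected (γ.extend '' Set.Icc 0 s) :=
        isPreconnected_Icc.image _ γ.continuous_extend.continuousOn
      have hAsub : γ.extend '' Set.Icc 0 s ⊆ U \ {y} := by
        rintro _ ⟨t, ht, rfl⟩
        have htI : t ∈ Set.Icc (0:ℝ) 1 := ⟨ht.1, ht.2.trans hs1⟩
        refine ⟨?_, ?_⟩
        · rw [γ.extend_apply htI]
          exact hγ _
        · rcases eq_or_lt_of_le ht.2 with h | h
          · rw [h]; exact hgsne
          · have hgt := hlt t ht.1 h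
            simp only [mem_singleton_iff]
            intro heq
            have : g t = 0 := by rw [hg]; simp [heq]
            linarith
      refine ⟨γ.extend '' Set.Icc 0 s ∪ (ball y r \ {y}), Set.union_subset hAsub hPU,
        Or.inr hp₀P, Or.inl ⟨0, ⟨le_refl 0, hs0⟩, by simp [Path.extend_zero]⟩, ?_⟩
      apply IsPreconnected.union (γ.extend s) _ _ hA hP
      · exact ⟨s, ⟨hs0, le_refl s⟩, rfl⟩
      · exact ⟨by rw [mem_ball]; exact lt_of_le_of_lt hgsle (by linarith), hgsne⟩
  · rw [Set.diff_singleton_eq_self hyU]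
    exact hU

/-! ### The topological hull -/

/-- The topological hull `T(S)` of a plane compactum: all points whose connected component
in the complement of `S` is bounded. -/
def TopHull (S : Set ℂ) : Set ℂ :=
  {z : ℂ | Bornology.IsBounded (connectedComponentIn Sᶜ z)}

lemma subset_topHull (X : Set ℂ) : X ⊆ TopHull X := by
  intro z hz
  show IsBounded (connectedComponentIn Xᶜ z)
  rw [connectedComponentIn_eq_empty (by simpa using hz)]
  exact isBounded_empty

lemma topHull_subset_closedBall {X : Set ℂ} {R : ℝ} (hR : 0 < R)
    (hX : X ⊆ closedBall 0 R) : TopHull X ⊆ closedBall 0 R := by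
  intro z hz
  by_contra hzB
  have hzR : R < ‖z‖ := by
    rw [mem_closedBall, dist_zero_right] at hzB; exact not_le.mp hzB
  have hznorm : 0 < ‖z‖ := lt_trans hR hzR
  set L : Set ℂ := (fun t : ℝ => t • z) '' Set.Ici 1 with hL
  have hLX : L ⊆ Xᶜ := by
    rintro _ ⟨t, ht, rfl⟩ hmem
    have h1 := hX hmem
    have ht1 : (1:ℝ) ≤ t := ht
    rw [mem_closedBall, dist_zero_right, norm_smul, Real.norm_eq_abs,
      abs_of_pos (by linarith : (0:ℝ) < t)] at h1
    nlinarith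
  have hLpre : IsPreconnected L :=
    isPreconnected_Ici.image _ (Continuous.continuousOn (by fun_prop))
  have hzL : z ∈ L := ⟨1, Set.mem_Ici.mpr (le_refl 1), one_smul ℝ z⟩
  have hLsub : L ⊆ connectedComponentIn Xᶜ z := hLpre.subset_connectedComponentIn hzL hLX
  have hzb : IsBounded (connectedComponentIn Xᶜ z) := hz
  have hbdd : IsBounded L := hzb.subset hLsub
  obtain ⟨R', hR'⟩ := hbdd.subset_closedBall 0
  have hmemL : ((max 1 ((R'+1)/‖z‖)) : ℝ) • z ∈ L := ⟨_, Set.mem_Ici.mpr (le_max_left _ _), rfl⟩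
  have h2 := hR' hmemL
  have hpos : (0:ℝ) < max 1 ((R'+1)/‖z‖) := lt_of_lt_of_le one_pos (le_max_left _ _)
  rw [mem_closedBall, dist_zero_right, norm_smul, Real.norm_eq_abs, abs_of_pos hpos] at h2
  have hmax : (R'+1)/‖z‖ ≤ max 1 ((R'+1)/‖z‖) := le_max_right _ _
  have hdm : (R'+1)/‖z‖ * ‖z‖ = R' + 1 := div_mul_cancel₀ _ (ne_of_gt hznorm)
  have h3 : R' + 1 ≤ max 1 ((R'+1)/‖z‖) * ‖z‖ := by nlinarith
  linarith

lemma compl_topHull_mem_of_mem {X : Set ℂ} {z u : ℂ} (hz : z ∉ TopHull X)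
    (hu : u ∈ connectedComponentIn Xᶜ z) : u ∉ TopHull X := by
  intro huT
  apply hz
  have heq : connectedComponentIn Xᶜ z = connectedComponentIn Xᶜ u := connectedComponentIn_eq hu
  show IsBounded (connectedComponentIn Xᶜ z)
  rw [heq]; exact huT

lemma isOpen_compl_topHull {X : Set ℂ} (hXcl : IsClosed X) : IsOpen (TopHull X)ᶜ := by
  rw [isOpen_iff_forall_mem_open]
  intro z hz
  have hzX : z ∈ Xᶜ := by
    by_contra h
    exact hz (show IsBounded (connectedComponentIn Xᶜ z) by
      rw [connectedComponentIn_eq_empty (by simpa using h)]; exact isBounded_empty)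
  exact ⟨connectedComponentIn Xᶜ z, fun u hu => compl_topHull_mem_of_mem hz hu,
    hXcl.isOpen_compl.connectedComponentIn, mem_connectedComponentIn hzX⟩

lemma isPreconnected_topHull {X : Set ℂ} (hXcl : IsClosed X) (hXb : IsBounded X)
    (hXconn : IsConnected X) : IsPreconnected (TopHull X) := by
  obtain ⟨x₀, hx₀⟩ := hXconn.nonempty
  apply isPreconnected_of_forall x₀
  intro z hz
  by_cases hzX : z ∈ X
  · exact ⟨X, subset_topHull X, hx₀, hzX, hXconn.isPreconnected⟩
  · have hzb : IsBounded (connectedComponentIn Xᶜ z) := hz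
    have hzXc : z ∈ Xᶜ := hzX
    set W := connectedComponentIn Xᶜ z with hW
    have hWopen : IsOpen W := hXcl.isOpen_compl.connectedComponentIn
    have hWne : z ∈ W := mem_connectedComponentIn hzXc
    have hclW : closure W ⊆ W ∪ X := by
      intro t ht
      by_cases htX : t ∈ X
      · exact Or.inr htX
      · exact Or.inl (mem_connectedComponentIn_of_mem_closure hXcl.isOpen_compl ht htX)
    have hWsubT : W ⊆ TopHull X := by
      intro u hu
      have heq : connectedComponentIn Xᶜ z = connectedComponentIn Xᶜ u := connectedComponentIn_eq hu
      show IsBounded (connectedComponentIn Xᶜ u)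
      rw [← heq]; exact hzb
    have hfr : ∃ c, c ∈ closure W ∧ c ∈ X := by
      by_contra h
      push_neg at h
      have hWcl : IsClosed W := by
        apply isClosed_of_closure_subset
        intro t ht
        rcases hclW ht with h3 | h3
        · exact h3
        · exact absurd h3 (h t ht)
      rcases isClopen_iff.mp ⟨hWcl, hWopen⟩ with h3 | h3
      · rw [h3] at hWne; exact hWne
      · exact complex_not_bounded_univ (h3 ▸ hzb)
    obtain ⟨c, hcW, hcX⟩ := hfr
    refine ⟨X ∪ closure W, ?_, Or.inl hx₀, Or.inr (subset_closure hWne), ?_⟩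
    · apply Set.union_subset (subset_topHull X)
      intro t ht
      rcases hclW ht with h3 | h3
      · exact hWsubT h3
      · exact subset_topHull X h3
    · exact IsPreconnected.union c hcX hcW hXconn.isPreconnected
        (isPreconnected_connectedComponentIn.closure)

lemma isPreconnected_compl_topHull {X : Set ℂ} {R : ℝ} (hR : 0 < R)
    (hX : X ⊆ closedBall 0 R) (hXcl : IsClosed X) : IsPreconnected (TopHull X)ᶜ := by
  set G : Set ℂ := (fun p : ℝ × ℂ => p.1 • p.2) '' ((Set.Ioi R) ×ˢ sphere (0:ℂ) 1) with hG
  have hGnorm : ∀ w ∈ G, R < ‖w‖ := by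
    rintro _ ⟨⟨t, u⟩, ⟨ht, hu⟩, rfl⟩
    rw [mem_sphere_zero_iff_norm] at hu
    have ht' : R < t := ht
    rw [norm_smul, hu, mul_one, Real.norm_eq_abs, abs_of_pos (lt_trans hR ht')]
    exact ht'
  have hGX : G ⊆ Xᶜ := by
    intro w hw hmem
    have h1 := hX hmem
    rw [mem_closedBall, dist_zero_right] at h1
    exact absurd h1 (not_le.mpr (hGnorm w hw))
  have hGpre : IsPreconnected G :=
    (isPreconnected_Ioi.prod
      (isConnected_sphere one_lt_rank_real_complex 0 zero_le_one).isPreconnected).image _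
      (Continuous.continuousOn (by fun_prop))
  have hmemG : ∀ w : ℂ, R < ‖w‖ → w ∈ G := by
    intro w hw
    have hpos : 0 < ‖w‖ := lt_trans hR hw
    refine ⟨⟨‖w‖, ‖w‖⁻¹ • w⟩, ⟨hw, ?_⟩, ?_⟩
    · rw [mem_sphere_zero_iff_norm, norm_smul, Real.norm_eq_abs,
        abs_of_pos (inv_pos.mpr hpos), inv_mul_cancel₀ (ne_of_gt hpos)]
    · show ‖w‖ • ‖w‖⁻¹ • w = w
      rw [smul_smul, mul_inv_cancel₀ (ne_of_gt hpos), one_smul]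
  set x₀ : ℂ := ((R+1 : ℝ) : ℂ) with hx₀
  have hx₀G : x₀ ∈ G := by
    apply hmemG
    rw [hx₀, Complex.norm_real, Real.norm_eq_abs, abs_of_pos (by linarith)]
    linarith
  apply isPreconnected_of_forall x₀
  intro z hz
  have hzX : z ∈ Xᶜ := by
    by_contra h
    exact hz (show IsBounded (connectedComponentIn Xᶜ z) by
      rw [connectedComponentIn_eq_empty (by simpa using h)]; exact isBounded_empty)
  have hWunb : ¬ IsBounded (connectedComponentIn Xᶜ z) := hz
  have hg : ∃ g ∈ connectedComponentIn Xᶜ z, R < ‖g‖ := by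
    by_contra h
    push_neg at h
    refine hWunb ((isBounded_closedBall (x := (0:ℂ)) (r := R)).subset ?_)
    intro w hw
    rw [mem_closedBall, dist_zero_right]
    exact h w hw
  obtain ⟨g, hgW, hgR⟩ := hg
  have hGsub : G ⊆ connectedComponentIn Xᶜ z := by
    have heq : connectedComponentIn Xᶜ z = connectedComponentIn Xᶜ g := connectedComponentIn_eq hgW
    rw [heq]
    exact hGpre.subset_connectedComponentIn (hmemG g hgR) hGX
  refine ⟨connectedComponentIn Xᶜ z, ?_, hGsub hx₀G, mem_connectedComponentIn hzX,
    isPreconnected_connectedComponentIn⟩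
  intro u hu
  exact compl_topHull_mem_of_mem hz hu

/-- Let `X ⊆ ℂ` be a continuum and `f : ℂ → ℂ` a perfect surjection with
`f⁻¹(T(X)) = T(X)` and `f` confluent on `ℂ \ T(X)`. Then for each `y ∉ T(X)` every
connected component of `f⁻¹(y)` is acyclic (its complement is connected). -/
theorem fibers_acyclic_outside_hull
    (X : Set ℂ) (hXc : IsCompact X) (hXconn : IsConnected X)
    (f : ℂ → ℂ) (hc : Continuous f) (hsurj : Function.Surjective f)
    (hclosed : IsClosedMap f) (hfib : ∀ y : ℂ, IsCompact (f ⁻¹' {y}))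
    (hinv : f ⁻¹' (TopHull X) = TopHull X)
    (hconfl : ∀ K : Set ℂ, K ⊆ (TopHull X)ᶜ → IsCompact K → IsConnected K →
      ∀ x ∈ f ⁻¹' K, f '' connectedComponentIn (f ⁻¹' K) x = K) :
    ∀ y ∉ TopHull X, ∀ x ∈ f ⁻¹' {y},
      IsConnected ((connectedComponentIn (f ⁻¹' {y}) x)ᶜ) := by
  intro y hy x hx
  set T := TopHull X with hTdef
  obtain ⟨R₀, hR₀⟩ := hXc.isBounded.subset_closedBall 0
  set R := max R₀ 1 with hRdef
  have hRpos : (0:ℝ) < R := lt_of_lt_of_le one_pos (le_max_right _ _)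
  have hXball : X ⊆ closedBall 0 R := by
    intro u hu
    have h1 := hR₀ hu
    rw [mem_closedBall] at h1 ⊢
    exact h1.trans (le_max_left _ _)
  have hTball : T ⊆ closedBall 0 R := topHull_subset_closedBall hRpos hXball
  have hTbd : IsBounded T := isBounded_closedBall.subset hTball
  have hTopen_c : IsOpen Tᶜ := isOpen_compl_topHull hXc.isClosed
  have hTcl : IsClosed T := isOpen_compl_iff.mp hTopen_c
  have hTpre : IsPreconnected T := isPreconnected_topHull hXc.isClosed hXc.isBounded hXconn
  have hTcpre : IsPreconnected Tᶜ := isPreconnected_compl_topHull hRpos hXball hXc.isClosed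
  have hTne : T.Nonempty := Set.Nonempty.mono (subset_topHull X) hXconn.nonempty
  have hfibT : f ⁻¹' {y} ⊆ Tᶜ := by
    intro u hu huT
    have h1 : u ∈ f ⁻¹' T := by rw [hTdef, hinv]; exact huT
    rw [mem_preimage] at h1 hu
    rw [mem_singleton_iff] at hu
    rw [hu] at h1
    exact hy h1
  set C := connectedComponentIn (f ⁻¹' {y}) x with hCdef
  have hCsub : C ⊆ f ⁻¹' {y} := connectedComponentIn_subset _ _
  have hCx : x ∈ C := mem_connectedComponentIn hx
  have hCpre : IsPreconnected C := isPreconnected_connectedComponentIn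
  have hCcomp : IsCompact C := by
    rw [hCdef, connectedComponentIn_eq_image hx]
    have : CompactSpace (f ⁻¹' {y}) := isCompact_iff_compactSpace.mp (hfib y)
    exact (isClosed_connectedComponent.isCompact).image continuous_subtype_val
  have hCcl : IsClosed C := hCcomp.isClosed
  have hCo : IsOpen Cᶜ := hCcl.isOpen_compl
  have hTC : T ⊆ Cᶜ := fun u hu huC => hfibT (hCsub huC) hu
  by_contra hcon
  have hCcne : Cᶜ.Nonempty := by
    by_contra h
    rw [Set.not_nonempty_iff_eq_empty, Set.compl_empty_iff] at h
    exact complex_not_bounded_univ (h ▸ hCcomp.isBounded)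
  have hnpre : ¬ IsPreconnected Cᶜ := fun h => hcon ⟨hCcne, h⟩
  have hexists : ∃ z₀ ∈ Cᶜ, connectedComponentIn Cᶜ z₀ ≠ Cᶜ := by
    by_contra h
    push_neg at h
    obtain ⟨z₀, hz₀⟩ := hCcne
    exact hnpre (h z₀ hz₀ ▸ isPreconnected_connectedComponentIn)
  obtain ⟨z₀, hz₀C, hz₀ne⟩ := hexists
  have hz₁ex : ∃ z₁ ∈ Cᶜ, z₁ ∉ connectedComponentIn Cᶜ z₀ := by
    by_contra h
    push_neg at h
    exact hz₀ne (Set.Subset.antisymm (connectedComponentIn_subset _ _) h)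
  obtain ⟨z₁, hz₁C, hz₁n⟩ := hz₁ex
  obtain ⟨p, hpT⟩ := hTne
  have hTU₀ : T ⊆ connectedComponentIn Cᶜ p := hTpre.subset_connectedComponentIn hpT hTC
  have hWex : ∃ zW ∈ Cᶜ, connectedComponentIn Cᶜ zW ≠ connectedComponentIn Cᶜ p := by
    by_cases h : connectedComponentIn Cᶜ z₀ = connectedComponentIn Cᶜ p
    · refine ⟨z₁, hz₁C, fun h1 => hz₁n ?_⟩
      rw [h, ← h1]
      exact mem_connectedComponentIn hz₁C
    · exact ⟨z₀, hz₀C, h⟩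
  obtain ⟨zW, hzWC, hWneU₀⟩ := hWex
  set W := connectedComponentIn Cᶜ zW with hWdef
  have hWopen : IsOpen W := hCo.connectedComponentIn
  have hzWW : zW ∈ W := mem_connectedComponentIn hzWC
  have hWsubCc : W ⊆ Cᶜ := connectedComponentIn_subset _ _
  have hWT : ∀ u ∈ W, u ∉ T := by
    intro u hu huT
    have h1 : connectedComponentIn Cᶜ zW = connectedComponentIn Cᶜ u := connectedComponentIn_eq hu
    have h2 : connectedComponentIn Cᶜ p = connectedComponentIn Cᶜ u :=
      connectedComponentIn_eq (hTU₀ huT)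
    exact hWneU₀ (h1.trans h2.symm)
  have hclW : closure W ⊆ W ∪ C := by
    intro t ht
    by_cases htC : t ∈ C
    · exact Or.inr htC
    · exact Or.inl (mem_connectedComponentIn_of_mem_closure hCo ht htC)
  have hzex : ∃ z ∈ W, f z ≠ y := by
    by_contra h
    push_neg at h
    have hWfib : W ⊆ f ⁻¹' {y} := fun u hu => h u hu
    have hclWfib : closure W ⊆ f ⁻¹' {y} :=
      closure_minimal hWfib (IsClosed.preimage hc isClosed_singleton)
    have hfr : ∃ c, c ∈ closure W ∧ c ∈ C := by
      by_contra h2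
      push_neg at h2
      have hWcl : IsClosed W := by
        apply isClosed_of_closure_subset
        intro t ht
        rcases hclW ht with h3 | h3
        · exact h3
        · exact absurd h3 (h2 t ht)
      rcases isClopen_iff.mp ⟨hWcl, hWopen⟩ with h3 | h3
      · rw [h3] at hzWW; exact hzWW
      · exact (hWsubCc (h3 ▸ Set.mem_univ x)) hCx
    obtain ⟨c, hcW, hcC⟩ := hfr
    have hD : IsPreconnected (closure W ∪ C) :=
      IsPreconnected.union c hcW hcC (isPreconnected_connectedComponentIn.closure) hCpre
    have hDsub : closure W ∪ C ⊆ f ⁻¹' {y} := Set.union_subset hclWfib hCsub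
    have hDC : closure W ∪ C ⊆ C := by
      rw [hCdef]
      exact hD.subset_connectedComponentIn (Or.inr hCx) hDsub
    exact (hWsubCc hzWW) (hDC (Or.inl (subset_closure hzWW)))
  obtain ⟨z, hzW, hfz⟩ := hzex
  have hwT : f z ∉ T := by
    intro h
    apply hWT z hzW
    have h1 : z ∈ f ⁻¹' T := by rw [mem_preimage]; exact h
    rw [hTdef, hinv] at h1
    exact h1
  have hvex : ∃ v, v ∉ T ∧ v ≠ y ∧ ∀ u ∈ closure W, f u ≠ v := by
    by_contra h
    push_neg at h
    have hZ : Tᶜ \ {y} ⊆ f '' closure W := by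
      rintro v ⟨hv1, hv2⟩
      obtain ⟨u, hu1, hu2⟩ := h v hv1 (by simpa using hv2)
      exact ⟨u, hu1, hu2⟩
    have hZcl : IsClosed (f '' closure W) := hclosed _ isClosed_closure
    have hTneu : T ≠ Set.univ := fun h2 => complex_not_bounded_univ (h2 ▸ hTbd)
    have hfrT : (frontier T).Nonempty := by
      by_contra h2
      rw [Set.not_nonempty_iff_eq_empty] at h2
      rcases isClopen_iff.mp (isClopen_iff_frontier_eq_empty.mpr h2) with h3 | h3
      · rw [h3] at hpT; exact hpT
      · exact hTneu h3
    obtain ⟨p', hp'⟩ := hfrT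
    rw [frontier_eq_closure_inter_closure] at hp'
    have hp'T : p' ∈ T := by rw [← hTcl.closure_eq]; exact hp'.1
    have hp'ne : p' ≠ y := fun h2 => hy (h2 ▸ hp'T)
    have hp'cl : p' ∈ closure (Tᶜ \ {y}) := by
      rw [_root_.mem_closure_iff]
      intro o ho hp'o
      have ho' : IsOpen (o ∩ {y}ᶜ) := ho.inter isOpen_compl_singleton
      have hp'o' : p' ∈ o ∩ {y}ᶜ := ⟨hp'o, hp'ne⟩
      obtain ⟨q, hq⟩ := _root_.mem_closure_iff.mp hp'.2 _ ho' hp'o'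
      exact ⟨q, hq.1.1, hq.2, hq.1.2⟩
    have hp'Z : p' ∈ f '' closure W := hZcl.closure_subset_iff.mpr hZ hp'cl
    obtain ⟨u, huW, hfu⟩ := hp'Z
    have huT : u ∈ T := by
      have h1 : u ∈ f ⁻¹' T := by rw [mem_preimage, hfu]; exact hp'T
      rw [hTdef, hinv] at h1
      exact h1
    rcases hclW huW with h4 | h4
    · exact hWT u h4 huT
    · exact hfibT (hCsub h4) huT
  obtain ⟨v, hvT, hvy, hvW⟩ := hvex
  have hOopen : IsOpen (Tᶜ \ {y}) := hTopen_c.sdiff isClosed_singleton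
  have hOpre : IsPreconnected (Tᶜ \ {y}) := isPreconnected_open_diff_singleton hTopen_c hTcpre y
  have hwO : f z ∈ Tᶜ \ {y} := ⟨hwT, by simpa using hfz⟩
  have hvO : v ∈ Tᶜ \ {y} := ⟨hvT, by simpa using hvy⟩
  have hOconn : IsConnected (Tᶜ \ {y}) := ⟨⟨v, hvO⟩, hOpre⟩
  have hOpath : IsPathConnected (Tᶜ \ {y}) := hOopen.isConnected_iff_isPathConnected.mp hOconn
  obtain ⟨γ, hγ⟩ := hOpath.joinedIn (f z) hwO v hvO
  set K := Set.range γ with hKdef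
  have hKO : K ⊆ Tᶜ \ {y} := by rintro _ ⟨t, rfl⟩; exact hγ t
  have hKT : K ⊆ Tᶜ := fun u hu => (hKO hu).1
  have hKcomp : IsCompact K := isCompact_range γ.continuous
  have hKconn : IsConnected K := isConnected_range γ.continuous
  have hzK : z ∈ f ⁻¹' K := by rw [mem_preimage]; exact ⟨0, γ.source⟩
  have hQ := hconfl K hKT hKcomp hKconn z hzK
  have hQC : connectedComponentIn (f ⁻¹' K) z ⊆ Cᶜ := by
    intro u hu huC
    have h1 : f u = y := hCsub huC
    have h2 : f u ∈ K := connectedComponentIn_subset (f ⁻¹' K) z hu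
    rw [h1] at h2
    exact (hKO h2).2 rfl
  have hQW : connectedComponentIn (f ⁻¹' K) z ⊆ W := by
    have hzWeq : connectedComponentIn Cᶜ zW = connectedComponentIn Cᶜ z :=
      connectedComponentIn_eq hzW
    rw [hWdef, hzWeq]
    exact isPreconnected_connectedComponentIn.subset_connectedComponentIn
      (mem_connectedComponentIn hzK) hQC
  have hvK : v ∈ f '' connectedComponentIn (f ⁻¹' K) z := by
    rw [hQ]; exact ⟨1, γ.target⟩
  obtain ⟨u, huQ, hfu⟩ := hvK
  exact hvW u (subset_closure (hQW huQ)) hfu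
end

section
/- Let K ⊂ ℂ be a nondegenerate compact set whose complement U∞ in the Riemann sphere is connected. Then for every point p ∈ U∞ there exists a closed round ball B (in the spherical metric) with interior contained in U∞ and |∂B ∩ K| ≥ 2 such that p belongs to the hyperbolic convex hull of B ∩ K taken inside B. -/
/-- The round 2-sphere (model of the Riemann sphere `ℂ∞`). -/
def Sph : Set (EuclideanSpace ℝ (Fin 3)) := Metric.sphere 0 1

/-- A closed round ball (spherical cap) on the sphere, with spherical center `u` and
"height" `t ∈ (-1,1)`: `{x ∈ S² | ⟪x,u⟫ ≥ t}`. -/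
def cap (u : EuclideanSpace ℝ (Fin 3)) (t : ℝ) : Set (EuclideanSpace ℝ (Fin 3)) :=
  {x ∈ Sph | t ≤ (inner ℝ x u : ℝ)}

/-- The interior of the cap within the sphere. -/
def capInt (u : EuclideanSpace ℝ (Fin 3)) (t : ℝ) : Set (EuclideanSpace ℝ (Fin 3)) :=
  {x ∈ Sph | t < (inner ℝ x u : ℝ)}

/-- The boundary circle of the cap. -/
def capBd (u : EuclideanSpace ℝ (Fin 3)) (t : ℝ) : Set (EuclideanSpace ℝ (Fin 3)) :=
  {x ∈ Sph | (inner ℝ x u : ℝ) = t}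

/-- `cap u t` is a Kulkarni–Pinkall ball for the compact set `K`: a round ball whose
interior misses `K` and whose boundary circle meets `K` in at least two points. -/
def IsKPBall (K : Set (EuclideanSpace ℝ (Fin 3))) (u : EuclideanSpace ℝ (Fin 3))
    (t : ℝ) : Prop :=
  u ∈ Sph ∧ t ∈ Set.Ioo (-1 : ℝ) 1 ∧ capInt u t ∩ K = ∅ ∧ Set.Nontrivial (capBd u t ∩ K)

/-- The hyperbolic convex hull of `A` inside the ball `cap u t`: the intersection of the
cap with all closed hyperbolic half-planes of the cap containing `A`. A closed hyperbolic
half-plane of `cap u t` is `cap u t ∩ cap v s` where the boundary circle of `cap v s`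
meets the boundary circle of `cap u t` orthogonally, which is expressed by the relation
`⟪u,v⟫ = t * s`. -/
def hypHull (u : EuclideanSpace ℝ (Fin 3)) (t : ℝ)
    (A : Set (EuclideanSpace ℝ (Fin 3))) : Set (EuclideanSpace ℝ (Fin 3)) :=
  cap u t ∩ ⋂₀ {H | ∃ v ∈ Sph, ∃ s ∈ Set.Ioo (-1 : ℝ) 1,
    (inner ℝ u v : ℝ) = t * s ∧ A ⊆ cap v s ∧ H = cap v s}

open Set Filter Topology

private lemma sq_le_imp {x y : ℝ} (hx : 0 ≤ x) (hy : 0 ≤ y) (h : x^2 ≤ y^2) : x ≤ y := by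
  calc x = Real.sqrt (x^2) := (Real.sqrt_sq hx).symm
  _ ≤ Real.sqrt (y^2) := Real.sqrt_le_sqrt h
  _ = y := Real.sqrt_sq hy

private lemma psi_anti {a b m : ℝ} (ha : -1 < a) (hb : b < 1) (hab : a ≤ b) (hbm : b ≤ m)
    (hm : m ≤ 1) :
    (m - b) / Real.sqrt (1 - b^2) ≤ (m - a) / Real.sqrt (1 - a^2) := by
  have ha1 : a < 1 := lt_of_le_of_lt hab hb
  have hb1 : -1 < b := lt_of_lt_of_le ha hab
  have hA : 0 < Real.sqrt (1 - a^2) := Real.sqrt_pos.2 (by nlinarith)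
  have hB : 0 < Real.sqrt (1 - b^2) := Real.sqrt_pos.2 (by nlinarith)
  have hA2 : (Real.sqrt (1 - a^2))^2 = 1 - a^2 := Real.sq_sqrt (by nlinarith)
  have hB2 : (Real.sqrt (1 - b^2))^2 = 1 - b^2 := Real.sq_sqrt (by nlinarith)
  rw [div_le_div_iff₀ hB hA]
  have h1 : 0 ≤ 1 - b*m := by nlinarith
  have h2 : 0 ≤ 1 - a*m := by nlinarith
  have key : 0 ≤ (b - a) * ((m - a)*(1 - b*m) + (m - b)*(1 - a*m)) := by
    apply mul_nonneg (by linarith)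
    have := mul_nonneg (by linarith : (0:ℝ) ≤ m - a) h1
    have := mul_nonneg (by linarith : (0:ℝ) ≤ m - b) h2
    linarith
  apply sq_le_imp (mul_nonneg (by linarith) hA.le) (mul_nonneg (by linarith) hB.le)
  calc ((m - b) * Real.sqrt (1 - a^2))^2 = (m-b)^2 * (1 - a^2) := by rw [mul_pow, hA2]
  _ ≤ (m-a)^2 * (1 - b^2) := by nlinarith [key]
  _ = ((m - a) * Real.sqrt (1 - b^2))^2 := by rw [mul_pow, hB2]


private lemma exists_theta {t m q r η : ℝ} (ht₁ : -1 < t) (ht₂ : t < 1) (hη : 0 < η)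
    (hd : 0 < (r - q) * (1 - t^2) + (m - t) * (t*q)) :
    ∃ θ : ℝ, 0 < Real.cos θ ∧ 0 < Real.sin θ ∧
      Real.sin θ * (1 - q) ≤ Real.cos θ * η ∧
      -1 < Real.cos θ * t - Real.sin θ ∧
      -1 < Real.cos θ * t + Real.sin θ * q ∧ Real.cos θ * t + Real.sin θ * q < 1 ∧
      (m - t) / Real.sqrt (1 - t^2) <
        (Real.cos θ * m + Real.sin θ * r - (Real.cos θ * t + Real.sin θ * q)) /
          Real.sqrt (1 - (Real.cos θ * t + Real.sin θ * q)^2) := by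
  have h1t : 0 < 1 - t^2 := by nlinarith
  set A := Real.sqrt (1 - t^2) with hA
  have hApos : 0 < A := Real.sqrt_pos.2 h1t
  have hA2 : A^2 = 1 - t^2 := Real.sq_sqrt h1t.le
  set τ : ℝ → ℝ := fun θ => Real.cos θ * t + Real.sin θ * q with hτ
  set f : ℝ → ℝ := fun θ =>
    (Real.cos θ * m + Real.sin θ * r - τ θ) / Real.sqrt (1 - τ θ^2) with hf
  have hτc : Continuous τ := by fun_prop
  have hτ0 : τ 0 = t := by simp [hτ]
  have hτ'0 : HasDerivAt τ q 0 := by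
    have := ((Real.hasDerivAt_cos 0).mul_const t).add ((Real.hasDerivAt_sin 0).mul_const q)
    simp only [Real.sin_zero, Real.cos_zero, neg_zero, zero_mul, one_mul, zero_add] at this
    exact this
  have hN0 : HasDerivAt (fun θ => Real.cos θ * m + Real.sin θ * r - τ θ) (r - q) 0 := by
    have := (((Real.hasDerivAt_cos 0).mul_const m).add
      ((Real.hasDerivAt_sin 0).mul_const r)).sub hτ'0
    simp only [Real.sin_zero, Real.cos_zero, neg_zero, zero_mul, one_mul, zero_add] at this
    exact this
  have hg0 : HasDerivAt (fun θ => 1 - τ θ^2) (-(2*t*q)) 0 := by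
    have h := (hτ'0.pow 2).const_sub 1
    simpa [hτ0] using h
  have hD0 : HasDerivAt (fun θ => Real.sqrt (1 - τ θ^2)) (-(2*t*q) / (2*A)) 0 := by
    have h := hg0.sqrt (by rw [hτ0]; exact ne_of_gt h1t)
    simpa [hτ0, hA] using h
  have hN0v : Real.cos 0 * m + Real.sin 0 * r - τ 0 = m - t := by simp [hτ0]
  have hD0v : Real.sqrt (1 - τ 0^2) = A := by rw [hτ0]
  set d : ℝ := ((r - q) * A - (m - t) * (-(2*t*q) / (2*A))) / A^2 with hdd
  have hfd : HasDerivAt f d 0 := by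
    have h := hN0.div hD0 (by rw [hD0v]; exact ne_of_gt hApos)
    rw [hf, hdd]
    rw [hN0v, hD0v] at h
    exact h
  have hdpos : 0 < d := by
    rw [hdd]
    apply div_pos ?_ (by positivity)
    have hnum : (r - q) * A - (m - t) * (-(2*t*q)/(2*A))
        = ((r - q) * (1 - t^2) + (m - t) * (t*q)) / A := by
      rw [← hA2]; field_simp; ring
    rw [hnum]
    exact div_pos hd hApos
  -- eventual facts
  have hslope : ∀ᶠ θ in 𝓝[>] (0:ℝ), 0 < slope f 0 θ := by
    have h1 : Tendsto (slope f 0) (𝓝[>] (0:ℝ)) (𝓝 d) :=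
      (hasDerivAt_iff_tendsto_slope.1 hfd).mono_left
        (nhdsWithin_mono 0 (fun x hx => ne_of_gt hx))
    exact h1.eventually_const_lt hdpos
  have hev2 : ∀ᶠ θ in 𝓝 (0:ℝ), 0 < Real.cos θ := by
    have : Tendsto Real.cos (𝓝 0) (𝓝 1) := by
      simpa using Real.continuous_cos.tendsto 0
    exact this.eventually_const_lt one_pos
  have hev3 : ∀ᶠ θ in 𝓝 (0:ℝ), Real.sin θ * (1-q) - Real.cos θ * η < 0 := by
    have hc : Tendsto (fun θ => Real.sin θ * (1-q) - Real.cos θ * η) (𝓝 0) (𝓝 (-η)) := by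
      have : Continuous (fun θ => Real.sin θ * (1-q) - Real.cos θ * η) := by fun_prop
      have h := this.tendsto 0
      simpa using h
    exact hc.eventually_lt_const (by linarith)
  have hev4 : ∀ᶠ θ in 𝓝 (0:ℝ), -1 < Real.cos θ * t - Real.sin θ := by
    have hc : Tendsto (fun θ => Real.cos θ * t - Real.sin θ) (𝓝 0) (𝓝 t) := by
      have : Continuous (fun θ => Real.cos θ * t - Real.sin θ) := by fun_prop
      have h := this.tendsto 0
      simpa using h
    exact hc.eventually_const_lt ht₁
  have hev5 : ∀ᶠ θ in 𝓝 (0:ℝ), τ θ ∈ Ioo (-1:ℝ) 1 := by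
    have hc : Tendsto τ (𝓝 0) (𝓝 t) := by
      have h := hτc.tendsto 0
      rwa [hτ0] at h
    exact hc.eventually (Ioo_mem_nhds ht₁ ht₂)
  have hev6 : ∀ᶠ θ in 𝓝[>] (0:ℝ), θ ∈ Ioo (0:ℝ) Real.pi :=
    eventually_of_mem (Ioo_mem_nhdsGT_of_mem ⟨le_refl 0, Real.pi_pos⟩) (fun _ h => h)
  have hall := (((hev2.and (hev3.and (hev4.and hev5))).filter_mono nhdsWithin_le_nhds).and
    (hslope.and hev6)).exists
  obtain ⟨θ, ⟨hc, h3, h4, hτIoo⟩, hsl, hθIoo⟩ := hall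
  have hθpos : 0 < θ := hθIoo.1
  have hsin : 0 < Real.sin θ := Real.sin_pos_of_pos_of_lt_pi hθIoo.1 hθIoo.2
  have hfθ : f 0 < f θ := by
    rw [slope_def_field] at hsl
    have h := mul_pos hsl hθpos
    rw [sub_zero, div_mul_cancel₀ _ (ne_of_gt hθpos)] at h
    linarith
  have hf0 : f 0 = (m - t) / A := by
    rw [hf]; simp [hτ0, hA]
  refine ⟨θ, hc, hsin, by linarith, h4, hτIoo.1, hτIoo.2, ?_⟩
  rw [hf0] at hfθ
  exact hfθ


set_option maxHeartbeats 4000000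

/-- Kulkarni–Pinkall inversion lemma: if `K` is a nondegenerate compact subset of the
sphere with connected complement `U∞`, then every point `p ∈ U∞` lies in the hyperbolic
convex hull of `B ∩ K` for some round ball `B` with interior contained in `U∞` and
`|∂B ∩ K| ≥ 2`. -/
theorem kulkarni_pinkall_lemma
    (K : Set (EuclideanSpace ℝ (Fin 3))) (hKs : K ⊆ Sph) (hKc : IsCompact K)
    (hKnt : K.Nontrivial) (hU : IsConnected (Sph \ K))
    (p : EuclideanSpace ℝ (Fin 3)) (hp : p ∈ Sph \ K) :
    ∃ (u : EuclideanSpace ℝ (Fin 3)) (t : ℝ),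
      IsKPBall K u t ∧ p ∈ hypHull u t (cap u t ∩ K) := by
  classical
  obtain ⟨hpS, hpK⟩ := hp
  have hpn : ‖p‖ = 1 := by simpa [Sph, mem_sphere_zero_iff_norm] using hpS
  have hKn : ∀ k ∈ K, ‖k‖ = 1 := fun k hk => by
    simpa [Sph, mem_sphere_zero_iff_norm] using hKs hk
  have hK0 : K.Nonempty := hKnt.nonempty
  set g : EuclideanSpace ℝ (Fin 3) → ℝ := fun w => sSup ((fun k => (inner ℝ k w : ℝ)) '' K)
    with hgdef
  have hg_att : ∀ w, ∃ k ∈ K, g w = (inner ℝ k w : ℝ) ∧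
      ∀ k' ∈ K, (inner ℝ k' w : ℝ) ≤ (inner ℝ k w : ℝ) := by
    intro w
    obtain ⟨k, hkK, hk⟩ := hKc.exists_isMaxOn (f := fun k => (inner ℝ k w : ℝ)) hK0
      ((continuous_id.inner continuous_const).continuousOn)
    refine ⟨k, hkK, ?_, fun k' hk' => hk hk'⟩
    refine IsGreatest.csSup_eq ⟨⟨k, hkK, rfl⟩, ?_⟩
    rintro x ⟨k', hk', rfl⟩
    exact hk hk'
  have hg_ub : ∀ w, ∀ k ∈ K, (inner ℝ k w : ℝ) ≤ g w := by
    intro w k hk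
    obtain ⟨k', _, hgw, hmax⟩ := hg_att w
    rw [hgw]; exact hmax k hk
  have hg_lip : ∀ u v : EuclideanSpace ℝ (Fin 3), g u ≤ g v + ‖u - v‖ := by
    intro u v
    obtain ⟨k, hkK, hgu, -⟩ := hg_att u
    have h1 : (inner ℝ k u : ℝ) = inner ℝ k v + inner ℝ k (u - v) := by
      rw [inner_sub_right]; ring
    have h2 : (inner ℝ k (u-v) : ℝ) ≤ ‖u - v‖ := by
      calc (inner ℝ k (u-v) : ℝ) ≤ ‖k‖ * ‖u-v‖ := real_inner_le_norm _ _
      _ = ‖u-v‖ := by rw [hKn k hkK, one_mul]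
    have h3 : (inner ℝ k v : ℝ) ≤ g v := hg_ub v k hkK
    rw [hgu, h1]; linarith
  have hg_cont : Continuous g := by
    refine LipschitzWith.continuous (K := 1) ?_
    refine LipschitzWith.of_dist_le_mul (fun u v => ?_)
    rw [Real.dist_eq, dist_eq_norm, NNReal.coe_one, one_mul, abs_le]
    constructor
    · have := hg_lip v u
      rw [norm_sub_rev] at this
      linarith
    · have := hg_lip u v
      linarith
  have hg_le : ∀ w : EuclideanSpace ℝ (Fin 3), ‖w‖ = 1 → g w ≤ 1 := by
    intro w hw
    obtain ⟨k, hkK, hgw, -⟩ := hg_att w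
    rw [hgw]
    calc (inner ℝ k w : ℝ) ≤ ‖k‖ * ‖w‖ := real_inner_le_norm _ _
    _ = 1 := by rw [hKn k hkK, hw, one_mul]
  have hinner_lt_one : ∀ x y : EuclideanSpace ℝ (Fin 3), ‖x‖ = 1 → ‖y‖ = 1 → x ≠ y →
      (inner ℝ x y : ℝ) < 1 := by
    intro x y hx hy hne
    have h0 : x - y ≠ 0 := sub_ne_zero.2 hne
    have h1 : 0 < ‖x - y‖^2 := pow_pos (norm_pos_iff.2 h0) 2
    rw [norm_sub_sq_real, hx, hy] at h1
    linarith
  have hg_lt_one : ∀ w, ‖w‖ = 1 → w ∉ K → g w < 1 := by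
    intro w hw hwK
    obtain ⟨k, hkK, hgw, -⟩ := hg_att w
    rw [hgw]
    exact hinner_lt_one k w (hKn k hkK) hw (fun h => hwK (h ▸ hkK))
  have hg_gt : ∀ w : EuclideanSpace ℝ (Fin 3), ‖w‖ = 1 → -1 < g w := by
    intro w hw
    obtain ⟨k₁, hk₁, k₂, hk₂, hne⟩ := hKnt
    have key : ∀ k ∈ K, k ≠ -w → -1 < (inner ℝ k w : ℝ) := by
      intro k hk hkw
      have h0 : k + w ≠ 0 := fun h => hkw (by
        have := eq_neg_of_add_eq_zero_left h
        exact this)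
      have h1 : 0 < ‖k + w‖^2 := pow_pos (norm_pos_iff.2 h0) 2
      rw [norm_add_sq_real, hKn k hk, hw] at h1
      linarith
    rcases eq_or_ne k₁ (-w) with h | h
    · have h2 : k₂ ≠ -w := fun h2 => hne (h.trans h2.symm)
      exact lt_of_lt_of_le (key k₂ hk₂ h2) (hg_ub w k₂ hk₂)
    · exact lt_of_lt_of_le (key k₁ hk₁ h) (hg_ub w k₁ hk₁)
  -- the functional and its maximizer
  set Φ : EuclideanSpace ℝ (Fin 3) → ℝ :=
    fun w => ((inner ℝ p w : ℝ) - g w) / Real.sqrt (1 - (g w)^2) with hΦdef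
  set C : Set (EuclideanSpace ℝ (Fin 3)) :=
    Metric.sphere 0 1 ∩ {w | g w ≤ (inner ℝ p w : ℝ)} with hCdef
  have hCmem : ∀ w ∈ C, ‖w‖ = 1 ∧ g w ≤ (inner ℝ p w : ℝ) := by
    intro w hw
    exact ⟨by simpa [mem_sphere_zero_iff_norm] using hw.1, hw.2⟩
  have hCg : ∀ w ∈ C, -1 < g w ∧ g w < 1 := by
    intro w hw
    obtain ⟨hw1, hw2⟩ := hCmem w hw
    refine ⟨hg_gt w hw1, ?_⟩
    by_cases hwK : w ∈ K
    · exfalso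
      have h1 : (inner ℝ w w : ℝ) = 1 := by
        rw [real_inner_self_eq_norm_sq, hw1]; norm_num
      have h2 : (1:ℝ) ≤ inner ℝ p w := le_trans (le_trans h1.ge (hg_ub w w hwK)) hw2
      have h3 : p = w := by
        by_contra hne
        exact absurd (hinner_lt_one p w hpn hw1 hne) (not_lt.2 h2)
      exact hpK (h3 ▸ hwK)
    · exact hg_lt_one w hw1 hwK
  have hCcpt : IsCompact C := (isCompact_sphere 0 1).inter_right
    (isClosed_le hg_cont (continuous_const.inner continuous_id))
  have hinnerpp : (inner ℝ p p : ℝ) = 1 := by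
    rw [real_inner_self_eq_norm_sq, hpn]; norm_num
  have hpC : p ∈ C := by
    constructor
    · simpa [mem_sphere_zero_iff_norm] using hpn
    · show g p ≤ (inner ℝ p p : ℝ)
      rw [hinnerpp]; exact hg_le p hpn
  have hΦcont : ContinuousOn Φ C := by
    apply ContinuousOn.div
    · exact ((continuous_const.inner continuous_id).sub hg_cont).continuousOn
    · exact (Real.continuous_sqrt.comp (continuous_const.sub (hg_cont.pow 2))).continuousOn
    · intro w hw
      obtain ⟨h1, h2⟩ := hCg w hw
      exact ne_of_gt (Real.sqrt_pos.2 (by nlinarith))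
  obtain ⟨u, huC, humax⟩ := hCcpt.exists_isMaxOn ⟨p, hpC⟩ hΦcont
  obtain ⟨hun, hupc⟩ := hCmem u huC
  obtain ⟨hgt_l, hgt_r⟩ := hCg u huC
  set t : ℝ := g u with htdef
  set m : ℝ := (inner ℝ p u : ℝ) with hmdef
  have hm1 : m ≤ 1 := by
    rw [hmdef]
    calc (inner ℝ p u : ℝ) ≤ ‖p‖ * ‖u‖ := real_inner_le_norm _ _
    _ = 1 := by rw [hpn, hun, one_mul]
  have hsq_t : 0 < Real.sqrt (1 - t^2) := Real.sqrt_pos.2 (by nlinarith)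
  have hΦp : 0 < Φ p := by
    have hgp1 : g p < 1 := hg_lt_one p hpn hpK
    have hgpm : -1 < g p := hg_gt p hpn
    rw [hΦdef]
    simp only
    rw [hinnerpp]
    exact div_pos (by linarith) (Real.sqrt_pos.2 (by nlinarith))
  have hΦu : 0 < Φ u := lt_of_lt_of_le hΦp (humax hpC)
  have hΦuval : Φ u = (m - t) / Real.sqrt (1 - t^2) := rfl
  have hmt : t < m := by
    by_contra h
    push_neg at h
    rw [hΦuval] at hΦu
    have : (m - t) / Real.sqrt (1 - t^2) ≤ 0 :=
      div_nonpos_iff.2 (Or.inr ⟨by linarith, hsq_t.le⟩)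
    linarith
  set E : Set (EuclideanSpace ℝ (Fin 3)) := {k ∈ K | (inner ℝ k u : ℝ) = t} with hEdef
  obtain ⟨k₀, hk₀K, hk₀g, hk₀max⟩ := hg_att u
  have hk₀E : k₀ ∈ E := ⟨hk₀K, hk₀g.symm⟩
  have hEclosed : IsClosed E := by
    have h : E = K ∩ {x | (inner ℝ x u : ℝ) = t} := rfl
    rw [h]
    exact hKc.isClosed.inter (isClosed_eq (continuous_id.inner continuous_const)
      continuous_const)
  have hEcpt : IsCompact E := hKc.of_isClosed_subset hEclosed (fun k hk => hk.1)
  have htm : t*m < 1 := by nlinarith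
  set β : ℝ := (1 - t^2)/(1 - t*m) with hβdef
  have hβpos : 0 < β := div_pos (by nlinarith) (by linarith)
  have hβeq : β * (1 - t*m) = 1 - t^2 :=
    div_mul_cancel₀ (1 - t^2) (by linarith : (1:ℝ) - t*m ≠ 0)
  have huu : (inner ℝ u u : ℝ) = 1 := by rw [real_inner_self_eq_norm_sq, hun]; norm_num
  have key : ∃ c ∈ closure (convexHull ℝ E), ∃ γ : ℝ, c = β • p + γ • u := by
    by_contra hcon
    push_neg at hcon
    set L : EuclideanSpace ℝ (Fin 3) →L[ℝ] EuclideanSpace ℝ (Fin 3) :=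
      ContinuousLinearMap.id ℝ _ - (innerSL ℝ u).smulRight u with hLdef
    have hLapp : ∀ x : EuclideanSpace ℝ (Fin 3), L x = x - (inner ℝ u x : ℝ) • u := by
      intro x
      simp [hLdef, ContinuousLinearMap.sub_apply]
    have hLsub : ∀ x y : EuclideanSpace ℝ (Fin 3), (inner ℝ x (L y) : ℝ) = inner ℝ (L x) y := by
      intro x y
      rw [hLapp, hLapp, inner_sub_right, inner_sub_left, real_inner_smul_right,
        real_inner_smul_left, real_inner_comm u x]
      ring
    have hEball : convexHull ℝ E ⊆ Metric.closedBall (0:EuclideanSpace ℝ (Fin 3)) 1 := by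
      apply convexHull_min ?_ (convex_closedBall _ _)
      intro k hk
      exact mem_closedBall_zero_iff.2 (le_of_eq (hKn k hk.1))
    have hHullcpt : IsCompact (closure (convexHull ℝ E)) := by
      apply (isCompact_closedBall (0:EuclideanSpace ℝ (Fin 3)) 1).of_isClosed_subset
        isClosed_closure
      exact closure_minimal hEball Metric.isClosed_closedBall
    set S := closure (convexHull ℝ (L '' E)) with hSdef
    have himg : L '' (convexHull ℝ E) = convexHull ℝ (L '' E) := by
      have h := (L : EuclideanSpace ℝ (Fin 3) →ₗ[ℝ] EuclideanSpace ℝ (Fin 3)).image_convexHull E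
      simpa using h
    have hx₀ : L (β • p) ∉ S := by
      intro hmem
      have hTcl : IsClosed (L '' (closure (convexHull ℝ E))) :=
        (hHullcpt.image L.continuous).isClosed
      have hsub2 : convexHull ℝ (L '' E) ⊆ L '' (closure (convexHull ℝ E)) := by
        rw [← himg]; exact image_mono subset_closure
      have hx : L (β • p) ∈ L '' (closure (convexHull ℝ E)) :=
        (closure_minimal hsub2 hTcl) hmem
      obtain ⟨c, hc, hLc⟩ := hx
      have hγ : c = β • p + ((inner ℝ u c : ℝ) - (inner ℝ u (β • p) : ℝ)) • u := by
        have h1 := hLc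
        rw [hLapp, hLapp] at h1
        calc c = (c - (inner ℝ u c : ℝ) • u) + (inner ℝ u c : ℝ) • u := by abel
        _ = (β•p - (inner ℝ u (β•p):ℝ) • u) + (inner ℝ u c:ℝ) • u := by rw [h1]
        _ = β • p + ((inner ℝ u c : ℝ) - (inner ℝ u (β • p) : ℝ)) • u := by
            rw [sub_smul]; abel
      exact hcon c hc _ hγ
    obtain ⟨f, σ, hfx, hfS⟩ := geometric_hahn_banach_point_closed
      ((convex_convexHull ℝ _).closure) isClosed_closure hx₀
    set hf : EuclideanSpace ℝ (Fin 3) := (InnerProductSpace.toDual ℝ _).symm f with hhf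
    have hfapp : ∀ y, (inner ℝ hf y : ℝ) = f y := fun y => InnerProductSpace.toDual_symm_apply
    set h₁ : EuclideanSpace ℝ (Fin 3) := L hf with hh₁
    have hsep0 : ∀ k ∈ E, σ - f (L (β • p)) ≤ (inner ℝ (k - β • p) h₁ : ℝ) := by
      intro k hk
      have h1 : σ < f (L k) := hfS _ (subset_closure (subset_convexHull ℝ _ ⟨k, hk, rfl⟩))
      have h2 : (inner ℝ (k - β•p) h₁ : ℝ) = f (L k) - f (L (β•p)) := by
        calc (inner ℝ (k - β•p) h₁ : ℝ) = inner ℝ (L (k - β•p)) hf := hLsub (k - β•p) hf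
        _ = inner ℝ hf (L (k - β•p)) := real_inner_comm _ _
        _ = f (L (k - β•p)) := hfapp _
        _ = f (L k) - f (L (β•p)) := by rw [map_sub L, map_sub f]
      linarith only [h1, h2]
    set ε₀ : ℝ := σ - f (L (β • p)) with hε₀
    have hε₀pos : 0 < ε₀ := by rw [hε₀]; linarith only [hfx]
    have hh₁ne : h₁ ≠ 0 := by
      intro h0
      have hj := hsep0 k₀ hk₀E
      rw [h0, inner_zero_right] at hj
      linarith only [hj, hε₀pos]
    set h : EuclideanSpace ℝ (Fin 3) := (-(‖h₁‖)⁻¹) • h₁ with hh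
    have hh₁pos : 0 < ‖h₁‖ := norm_pos_iff.2 hh₁ne
    have hhn : ‖h‖ = 1 := by
      rw [hh, norm_smul, Real.norm_eq_abs, abs_neg, abs_inv, abs_of_pos hh₁pos]
      field_simp
    have hhu : (inner ℝ h u : ℝ) = 0 := by
      rw [hh, real_inner_smul_left]
      have hz : (inner ℝ h₁ u : ℝ) = 0 := by
        rw [hh₁, real_inner_comm, hLsub u hf]
        have hLu : L u = 0 := by
          rw [hLapp, huu, one_smul, sub_self]
        rw [hLu, inner_zero_left]
      rw [hz, mul_zero]
    set r : ℝ := (inner ℝ p h : ℝ) with hr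
    set ε : ℝ := ε₀ * (‖h₁‖)⁻¹ with hε
    have hεpos : 0 < ε := mul_pos hε₀pos (inv_pos.2 hh₁pos)
    have hsep : ∀ k ∈ E, (inner ℝ k h : ℝ) ≤ β * r - ε := by
      intro k hk
      have h1 := hsep0 k hk
      have h2 : (inner ℝ k h : ℝ) - β * r = (inner ℝ (k - β•p) h : ℝ) := by
        rw [inner_sub_left, real_inner_smul_left, hr]
      have h3 : (inner ℝ (k - β•p) h : ℝ) = -((‖h₁‖)⁻¹ * (inner ℝ (k - β•p) h₁ : ℝ)) := by
        rw [hh, real_inner_smul_right]; ring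
      have h4 : (‖h₁‖)⁻¹ * ε₀ ≤ (‖h₁‖)⁻¹ * (inner ℝ (k - β•p) h₁ : ℝ) :=
        mul_le_mul_of_nonneg_left h1 (inv_pos.2 hh₁pos).le
      have h5 : ε = (‖h₁‖)⁻¹ * ε₀ := by rw [hε]; ring
      linarith only [h1, h2, h3, h4, h5]
    have hηex : ∃ η : ℝ, 0 < η ∧
        ∀ k ∈ K, t - η < (inner ℝ k u : ℝ) → (inner ℝ k h : ℝ) ≤ β*r - ε/2 := by
      set F : Set (EuclideanSpace ℝ (Fin 3)) := {k ∈ K | β*r - ε/2 ≤ (inner ℝ k h : ℝ)} with hF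
      have hFclosed : IsClosed F := by
        have hFeq : F = K ∩ {x | β*r - ε/2 ≤ (inner ℝ x h : ℝ)} := rfl
        rw [hFeq]
        exact hKc.isClosed.inter
          (isClosed_le continuous_const (continuous_id.inner continuous_const))
      have hFcpt : IsCompact F := hKc.of_isClosed_subset hFclosed (fun k hk => hk.1)
      rcases F.eq_empty_or_nonempty with hFe | hFne
      · refine ⟨1, one_pos, fun k hk hk2 => ?_⟩
        by_contra hc2
        push_neg at hc2
        have hkF : k ∈ F := ⟨hk, hc2.le⟩
        rw [hFe] at hkF
        exact hkF
      · obtain ⟨kF, hkFF, hkFmax⟩ := hFcpt.exists_isMaxOn (f := fun k => (inner ℝ k u : ℝ)) hFne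
          ((continuous_id.inner continuous_const).continuousOn)
        have hkFlt : (inner ℝ kF u : ℝ) < t := by
          rcases lt_or_eq_of_le (hg_ub u kF hkFF.1) with h' | h'
          · exact h'
          · exfalso
            have hkE : kF ∈ E := ⟨hkFF.1, h'⟩
            have hs1 := hsep kF hkE
            have hs2 := hkFF.2
            linarith only [hs1, hs2, hεpos]
        refine ⟨t - (inner ℝ kF u : ℝ), by linarith only [hkFlt], fun k hk hk2 => ?_⟩
        by_contra hc2
        push_neg at hc2
        have hkF : k ∈ F := ⟨hk, hc2.le⟩
        have hj : (inner ℝ k u : ℝ) ≤ (inner ℝ kF u : ℝ) := hkFmax hkF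
        linarith only [hj, hk2]
    obtain ⟨η, hηpos, hηprop⟩ := hηex
    set q : ℝ := β * r - ε/2 with hq
    have h1tm : (1:ℝ) - t*m ≠ 0 := by linarith only [htm]
    have hd : 0 < (r - q) * (1 - t^2) + (m - t) * (t*q) := by
      have hid : (r - q) * (1 - t^2) + (m - t) * (t*q) = (1 - t*m) * (ε/2) := by
        rw [hq]
        linear_combination (-r) * hβeq
      rw [hid]
      exact mul_pos (by linarith only [htm]) (by linarith only [hεpos])
    obtain ⟨θ, hcosθ, hsinθ, hcond3, hcond5, hτgt, hτlt, hfθ⟩ :=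
      exists_theta hgt_l hgt_r hηpos hd
    set τθ : ℝ := Real.cos θ * t + Real.sin θ * q with hτθ
    set u' : EuclideanSpace ℝ (Fin 3) := Real.cos θ • u + Real.sin θ • h with hu'
    clear_value hf h₁ h r ε ε₀ q τθ u'
    have huh : (inner ℝ u h : ℝ) = 0 := by rw [real_inner_comm]; exact hhu
    have hu'n : ‖u'‖ = 1 := by
      have h1 : ‖u'‖^2 = 1 := by
        rw [hu', norm_add_sq_real, real_inner_smul_left, real_inner_smul_right, huh]
        rw [norm_smul, norm_smul, hun, hhn, Real.norm_eq_abs, Real.norm_eq_abs]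
        rw [mul_one, mul_one]
        simp only [sq_abs]
        linear_combination Real.sin_sq_add_cos_sq θ
      have h2 : (‖u'‖ - 1)*(‖u'‖ + 1) = 0 := by linear_combination h1
      rcases mul_eq_zero.1 h2 with h3 | h3
      · linarith only [h3]
      · linarith only [h3, norm_nonneg u']
    have hinner_u' : ∀ x : EuclideanSpace ℝ (Fin 3),
        (inner ℝ x u' : ℝ) = Real.cos θ * (inner ℝ x u : ℝ) + Real.sin θ * (inner ℝ x h : ℝ) := by
      intro x
      rw [hu', inner_add_right, real_inner_smul_right, real_inner_smul_right]
    have hm' : (inner ℝ p u' : ℝ) = Real.cos θ * m + Real.sin θ * r := by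
      rw [hinner_u' p, ← hmdef, ← hr]
    have hgu'le : g u' ≤ τθ := by
      obtain ⟨k', hk'K, hgu', -⟩ := hg_att u'
      rw [hgu', hinner_u' k', hτθ]
      by_cases hcase : t - η < (inner ℝ k' u : ℝ)
      · have h1 : (inner ℝ k' h : ℝ) ≤ q := hηprop k' hk'K hcase
        have h2 := hg_ub u k' hk'K
        have e1 : Real.cos θ * (inner ℝ k' u : ℝ) ≤ Real.cos θ * t :=
          mul_le_mul_of_nonneg_left h2 hcosθ.le
        have e2 : Real.sin θ * (inner ℝ k' h : ℝ) ≤ Real.sin θ * q :=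
          mul_le_mul_of_nonneg_left h1 hsinθ.le
        linarith only [e1, e2]
      · push_neg at hcase
        have h2 : (inner ℝ k' h : ℝ) ≤ 1 := by
          calc (inner ℝ k' h:ℝ) ≤ ‖k'‖*‖h‖ := real_inner_le_norm _ _
          _ = 1 := by rw [hKn k' hk'K, hhn, one_mul]
        have e1 : Real.cos θ * (inner ℝ k' u : ℝ) ≤ Real.cos θ * (t - η) :=
          mul_le_mul_of_nonneg_left hcase hcosθ.le
        have e2 : Real.sin θ * (inner ℝ k' h : ℝ) ≤ Real.sin θ * 1 :=
          mul_le_mul_of_nonneg_left h2 hsinθ.le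
        linarith only [e1, e2, hcond3]
    have hgu'gt : -1 < g u' := by
      have h2 : -1 ≤ (inner ℝ k₀ h : ℝ) := by
        have ha := abs_real_inner_le_norm k₀ h
        rw [hKn k₀ hk₀K, hhn, one_mul] at ha
        linarith only [(abs_le.1 ha).1]
      have h3 : (inner ℝ k₀ u : ℝ) = t := hk₀g.symm
      have h1 : Real.cos θ * t - Real.sin θ ≤ (inner ℝ k₀ u' : ℝ) := by
        rw [hinner_u' k₀, h3]
        have e3 : Real.sin θ * (-1) ≤ Real.sin θ * (inner ℝ k₀ h : ℝ) :=
          mul_le_mul_of_nonneg_left h2 hsinθ.le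
        linarith only [e3]
      linarith only [hcond5, hg_ub u' k₀ hk₀K, h1]
    have hgu'lt : g u' < 1 := lt_of_le_of_lt hgu'le hτlt
    have hΦu'le : Φ u' ≤ Φ u := by
      by_cases hcase : g u' ≤ (inner ℝ p u' : ℝ)
      · exact humax ⟨by simpa [mem_sphere_zero_iff_norm] using hu'n, hcase⟩
      · push_neg at hcase
        have hden : 0 < Real.sqrt (1 - (g u')^2) := Real.sqrt_pos.2 (by
          have hx : (0:ℝ) < (1 - g u')*(1 + g u') :=
            mul_pos (by linarith only [hgu'lt]) (by linarith only [hgu'gt])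
          nlinarith only [hx])
        have hneg : Φ u' < 0 := by
          have hΦv : Φ u' = ((inner ℝ p u' : ℝ) - g u')/Real.sqrt (1 - (g u')^2) := rfl
          rw [hΦv]
          exact div_neg_of_neg_of_pos (by linarith only [hcase]) hden
        linarith only [hneg, hΦu]
    have hnum : τθ < Real.cos θ * m + Real.sin θ * r := by
      by_contra hc2
      push_neg at hc2
      have h1 : (Real.cos θ*m + Real.sin θ*r - τθ)/Real.sqrt (1-τθ^2) ≤ 0 :=
        div_nonpos_iff.2 (Or.inr ⟨by linarith only [hc2], (Real.sqrt_nonneg _)⟩)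
      have h2 : 0 < (m - t)/Real.sqrt (1-t^2) := div_pos (by linarith only [hmt]) hsq_t
      linarith only [h1, h2, hfθ]
    have hm'le1 : Real.cos θ * m + Real.sin θ * r ≤ 1 := by
      rw [← hm']
      calc (inner ℝ p u' : ℝ) ≤ ‖p‖*‖u'‖ := real_inner_le_norm _ _
      _ = 1 := by rw [hpn, hu'n, one_mul]
    have hanti := psi_anti hgu'gt hτlt hgu'le hnum.le hm'le1
    have hΦu'val : Φ u' = (Real.cos θ*m + Real.sin θ*r - g u')/Real.sqrt (1 - (g u')^2) := by
      have hΦv : Φ u' = ((inner ℝ p u' : ℝ) - g u')/Real.sqrt (1 - (g u')^2) := rfl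
      rw [hΦv, hm']
    have hfinal : Φ u < Φ u' := by
      rw [hΦuval, hΦu'val]
      calc (m-t)/Real.sqrt (1-t^2)
          < (Real.cos θ*m + Real.sin θ*r - τθ)/Real.sqrt (1-τθ^2) := hfθ
      _ ≤ _ := hanti
    linarith only [hfinal, hΦu'le]
  obtain ⟨c, hcHull, γ, hcγ⟩ := key
  have hcu : (inner ℝ c u : ℝ) = t := by
    have hsub : closure (convexHull ℝ E) ⊆ {x | (inner ℝ x u : ℝ) = t} := by
      apply closure_minimal
      · apply convexHull_min (fun k hk => hk.2)
        intro x hx y hy a b ha hb hab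
        simp only [mem_setOf_eq] at hx hy ⊢
        rw [inner_add_left, real_inner_smul_left, real_inner_smul_left, hx, hy]
        linear_combination t*hab
      · exact isClosed_eq (continuous_id.inner continuous_const) continuous_const
    exact hsub hcHull
  have hγval : γ = t - β*m := by
    have h1 : (inner ℝ c u : ℝ) = β * m + γ := by
      rw [hcγ, inner_add_left, real_inner_smul_left, real_inner_smul_left, huu, ← hmdef]
      ring
    rw [hcu] at h1
    linarith only [h1]
  have hEnt : E.Nontrivial := by
    by_contra hcon
    have hsing : E = {k₀} := (Set.not_nontrivial_iff.1 hcon).eq_singleton_of_mem hk₀E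
    have hck : c = k₀ := by
      have h := hcHull
      rw [hsing, convexHull_singleton, closure_singleton, mem_singleton_iff] at h
      exact h
    have hcn : ‖c‖ = 1 := by rw [hck]; exact hKn k₀ hk₀K
    have hc2 : ‖c‖^2 = β^2 + 2*(β*(γ*m)) + γ^2 := by
      rw [hcγ, norm_add_sq_real, real_inner_smul_left, real_inner_smul_right]
      rw [norm_smul, norm_smul, hpn, hun, Real.norm_eq_abs, Real.norm_eq_abs]
      rw [mul_one, mul_one, ← hmdef]
      simp only [sq_abs]
    have h1 : β^2 + 2*(β*(γ*m)) + γ^2 = 1 := by rw [← hc2, hcn]; norm_num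
    have h2 : t^2 + β^2*(1-m^2) = 1 := by
      rw [hγval] at h1
      linear_combination h1
    have h3 : β*(β*(1-m^2)) = β*(1-t*m) := by
      calc β*(β*(1-m^2)) = β^2*(1-m^2) := by ring
      _ = 1 - t^2 := by linarith only [h2]
      _ = β*(1-t*m) := hβeq.symm
    have h4 : β*(1-m^2) = 1-t*m := mul_left_cancel₀ (ne_of_gt hβpos) h3
    have h5 : (1-t^2)*(1-m^2) = (1-t*m)^2 := by
      calc (1-t^2)*(1-m^2) = β*(1-t*m)*(1-m^2) := by rw [hβeq]
      _ = (1-t*m)*(β*(1-m^2)) := by ring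
      _ = (1-t*m)*(1-t*m) := by rw [h4]
      _ = (1-t*m)^2 := by ring
    have h6 : (t-m)^2 = 0 := by linear_combination -h5
    rw [pow_eq_zero_iff two_ne_zero, sub_eq_zero] at h6
    linarith only [h6, hmt]
  have hpcap : p ∈ cap u t := ⟨hpS, by rw [← hmdef]; exact hmt.le⟩
  refine ⟨u, t, ⟨?_, ⟨hgt_l, hgt_r⟩, ?_, ?_⟩, hpcap, ?_⟩
  · show u ∈ Sph
    simpa [Sph, mem_sphere_zero_iff_norm] using hun
  · apply eq_empty_iff_forall_notMem.2
    rintro x ⟨⟨hxS, hxlt⟩, hxK⟩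
    exact absurd (hg_ub u x hxK) (not_le.2 hxlt)
  · exact hEnt.mono (fun k hk => ⟨⟨hKs hk.1, hk.2⟩, hk.1⟩)
  · intro H hH
    obtain ⟨v, hvS, s, hs, huv, hsub, rfl⟩ := hH
    refine ⟨hpS, ?_⟩
    have hEcapv : ∀ k ∈ E, k ∈ {x | s ≤ (inner ℝ x v : ℝ)} := by
      intro k hk
      exact (hsub ⟨⟨hKs hk.1, le_of_eq hk.2.symm⟩, hk.1⟩).2
    have hcv : s ≤ (inner ℝ c v : ℝ) := by
      have hsubc : closure (convexHull ℝ E) ⊆ {x | s ≤ (inner ℝ x v : ℝ)} := by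
        apply closure_minimal
        · apply convexHull_min hEcapv
          exact convex_halfSpace_ge
            ⟨fun a b => by rw [inner_add_left], fun c x => by rw [real_inner_smul_left, smul_eq_mul]⟩ s
        · exact isClosed_le continuous_const (continuous_id.inner continuous_const)
      exact hsubc hcHull
    have h1 : (inner ℝ c v : ℝ) = β * (inner ℝ p v : ℝ) + γ*(t*s) := by
      rw [hcγ, inner_add_left, real_inner_smul_left, real_inner_smul_left, huv]
    have h2 : γ * t = 1 - β := by
      rw [hγval]
      linear_combination hβeq
    have h2' : γ*(t*s) = s - β*s := by linear_combination s*h2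
    have h3 : β * s ≤ β * (inner ℝ p v : ℝ) := by linarith only [hcv, h1, h2']
    exact (mul_le_mul_iff_of_pos_left hβpos).1 h3
end
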